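/- arXiv:2602.19204 — 7 statements merged into one kernel-verified Lean document; each statement's English description precedes it below -/
import Mathlib

section
/- Suppose the initial data satisfy E‖x_0^i − x_0^j‖² < ∞ for all i, j ∈ {1,…,N}. Then for every n ≥ 0 and all i, j ∈ {1,…,N}, the exact one-step identity E‖x_{n+1}^i − x_{n+1}^j‖² = (1 − h(2λ₀ − λ₀²h − σ²)) · E‖x_n^i − x_n^j‖² holds. -/
open MeasureTheory ProbabilityTheory Filter
open scoped NNReal ENNReal

section AuxGaussian
open Real

lemma aux_rpow_two (x : ℝ) : x ^ (2:ℝ) = x ^ 2 := by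
  rw [show (2:ℝ) = ((2:ℕ):ℝ) by norm_num, Real.rpow_natCast]

lemma aux_odd {b : ℝ} : ∫ x : ℝ, x * Real.exp (-b * x^2) = 0 := by
  have h := MeasureTheory.integral_neg_eq_self (fun x : ℝ => x * Real.exp (-b * x^2))
    (volume : Measure ℝ)
  simp only [neg_sq, neg_mul] at h ⊢
  rw [MeasureTheory.integral_neg] at h
  linarith

lemma aux_sq {b : ℝ} (hb : 0 < b) :
    ∫ x : ℝ, x^2 * Real.exp (-b * x^2) = Real.sqrt (Real.pi / b) / (2*b) := by
  have hint : Integrable (fun x : ℝ => x^2 * Real.exp (-b * x^2)) := by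
    have := integrable_rpow_mul_exp_neg_mul_sq hb (s := 2) (by norm_num)
    simpa only [aux_rpow_two] using this
  have hsplit : (∫ x in Set.Iic (0:ℝ), x^2 * Real.exp (-b*x^2))
      + (∫ x in Set.Ioi (0:ℝ), x^2 * Real.exp (-b*x^2))
      = ∫ x : ℝ, x^2 * Real.exp (-b*x^2) := by
    rw [← Set.compl_Iic]
    exact MeasureTheory.integral_add_compl measurableSet_Iic hint
  have hiic : (∫ x in Set.Iic (0:ℝ), x^2*Real.exp (-b*x^2))
      = ∫ x in Set.Ioi (0:ℝ), x^2*Real.exp (-b*x^2) := by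
    have := integral_comp_neg_Iic (0:ℝ) (fun x => x^2 * Real.exp (-b*x^2))
    simpa [neg_sq] using this
  have hIoi : (∫ x in Set.Ioi (0:ℝ), x^2 * Real.exp (-b*x^2))
      = b ^ (-(3:ℝ)/2) * (1/2) * Real.Gamma ((3:ℝ)/2) := by
    rw [show (∫ x in Set.Ioi (0:ℝ), x^2 * Real.exp (-b*x^2))
        = ∫ x in Set.Ioi (0:ℝ), x ^ (2:ℝ) * Real.exp (-b * x ^ (2:ℝ)) from
      MeasureTheory.setIntegral_congr_fun measurableSet_Ioi (fun x _ => by rw [aux_rpow_two]),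
      integral_rpow_mul_exp_neg_mul_rpow (by norm_num) (by norm_num) hb]
    norm_num
  have hGamma : Real.Gamma ((3:ℝ)/2) = Real.sqrt Real.pi / 2 := by
    rw [show (3:ℝ)/2 = 1/2 + 1 by norm_num, Real.Gamma_add_one (by norm_num),
      Real.Gamma_one_half_eq]
    ring
  have hsb : (0:ℝ) < Real.sqrt b := Real.sqrt_pos.2 hb
  have hrpow : b ^ (-(3:ℝ)/2) = (b * Real.sqrt b)⁻¹ := by
    rw [show (-(3:ℝ)/2) = -(1 + 1/2) by norm_num, Real.rpow_neg hb.le,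
      Real.rpow_add hb, Real.rpow_one, ← Real.sqrt_eq_rpow]
  have hdiv : Real.sqrt (Real.pi / b) = Real.sqrt Real.pi / Real.sqrt b :=
    Real.sqrt_div pi_pos.le b
  have hbb : Real.sqrt b * Real.sqrt b = b := Real.mul_self_sqrt hb.le
  rw [← hsplit, hiic, hIoi, hGamma, hrpow, hdiv]
  field_simp
  nlinarith [hbb, hsb, Real.sqrt_nonneg Real.pi]

lemma aux_gaussian_sq {v : ℝ≥0} (hv : v ≠ 0) (c s : ℝ) :
    Integrable (fun w => (c - s*w)^2) (gaussianReal 0 v) ∧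
    ∫ w, (c - s*w)^2 ∂(gaussianReal 0 v) = c^2 + s^2 * (v:ℝ) := by
  have hv' : (0:ℝ) < (v:ℝ) := NNReal.coe_pos.mpr (pos_iff_ne_zero.mpr hv)
  set b : ℝ := (2*(v:ℝ))⁻¹ with hbdef
  have hb : 0 < b := inv_pos.mpr (by linarith)
  set C : ℝ := (Real.sqrt (2*Real.pi*(v:ℝ)))⁻¹ with hCdef
  have hpdf : ∀ x : ℝ, gaussianPDFReal 0 v x = C * Real.exp (-b * x^2) := by
    intro x
    rw [gaussianPDFReal]
    simp only [sub_zero, hCdef]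
    congr 1
    rw [hbdef]
    field_simp
  have hE1 : Integrable (fun x : ℝ => Real.exp (-b*x^2)) := integrable_exp_neg_mul_sq hb
  have hE2 : Integrable (fun x : ℝ => x * Real.exp (-b*x^2)) := integrable_mul_exp_neg_mul_sq hb
  have hE3 : Integrable (fun x : ℝ => x^2 * Real.exp (-b*x^2)) := by
    simpa only [aux_rpow_two] using
      integrable_rpow_mul_exp_neg_mul_sq hb (s := 2) (by norm_num)
  have hprod : ∀ x : ℝ, Real.exp (-b*x^2) * (c - s*x)^2
      = c^2 * Real.exp (-b*x^2) - (2*c*s) * (x * Real.exp (-b*x^2))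
        + s^2 * (x^2 * Real.exp (-b*x^2)) := fun x => by ring
  have hA : Integrable (fun x : ℝ => c^2 * Real.exp (-b*x^2)
      - (2*c*s) * (x * Real.exp (-b*x^2))) := (hE1.const_mul _).sub (hE2.const_mul _)
  have hB : Integrable (fun x : ℝ => s^2 * (x^2 * Real.exp (-b*x^2))) := hE3.const_mul _
  have hintexp : Integrable (fun x : ℝ => Real.exp (-b*x^2) * (c - s*x)^2) := by
    simp only [hprod]
    exact hA.add hB
  have hval : ∫ x : ℝ, Real.exp (-b*x^2) * (c - s*x)^2
      = c^2 * Real.sqrt (Real.pi/b) + s^2 * (Real.sqrt (Real.pi/b)/(2*b)) := by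
    simp only [hprod]
    rw [integral_add hA hB, integral_sub (hE1.const_mul _) (hE2.const_mul _),
      integral_const_mul, integral_const_mul, integral_const_mul,
      integral_gaussian, aux_odd, aux_sq hb]
    ring
  have hpm : gaussianReal 0 v = volume.withDensity
      (fun x => ((Real.toNNReal (gaussianPDFReal 0 v x) : ℝ≥0) : ℝ≥0∞)) := by
    rw [gaussianReal_of_var_ne_zero _ hv]; rfl
  have hmeaspdf : Measurable (fun x => Real.toNNReal (gaussianPDFReal 0 v x)) :=
    (measurable_gaussianPDFReal 0 v).real_toNNReal
  have hsmul : ∀ x : ℝ, (Real.toNNReal (gaussianPDFReal 0 v x) : ℝ≥0) • ((c - s*x)^2)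
      = C * (Real.exp (-b*x^2) * (c - s*x)^2) := by
    intro x
    rw [NNReal.smul_def, smul_eq_mul, Real.coe_toNNReal _ (gaussianPDFReal_nonneg _ _ _), hpdf x]
    ring
  have normpdf : C * Real.sqrt (Real.pi / b) = 1 := by
    have h1 := integral_gaussianPDFReal_eq_one 0 hv
    simp only [hpdf] at h1
    rwa [integral_const_mul, integral_gaussian] at h1
  constructor
  · rw [hpm, integrable_withDensity_iff_integrable_smul hmeaspdf]
    simp only [hsmul]
    exact hintexp.const_mul C
  · rw [hpm, integral_withDensity_eq_integral_smul hmeaspdf]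
    simp only [hsmul]
    rw [integral_const_mul, hval]
    have h2b : 1/(2*b) = (v:ℝ) := by rw [hbdef]; field_simp
    calc C * (c^2 * Real.sqrt (Real.pi/b) + s^2 * (Real.sqrt (Real.pi/b)/(2*b)))
        = (C * Real.sqrt (Real.pi/b)) * c^2
          + (C * Real.sqrt (Real.pi/b)) * (s^2 * (1/(2*b))) := by ring
      _ = c^2 + s^2 * (v:ℝ) := by rw [normpdf, h2b]; ring

end AuxGaussian

/-- One-step identity for the discrete Ad-CBO scheme:
`E‖x_{n+1}^i − x_{n+1}^j‖² = (1 − h(2λ₀ − λ₀²h − σ²)) E‖x_n^i − x_n^j‖²`. -/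
theorem adCBO_one_step_identity
    {Ω : Type*} [MeasurableSpace Ω] (P : Measure Ω) [IsProbabilityMeasure P]
    (d N : ℕ) (h lam0 lam1 sigma : ℝ)
    (hh : 0 < h) (hlam0 : 0 < lam0) (hlam1 : 0 ≤ lam1) (hsigma : 0 ≤ sigma)
    (W : ℕ → Ω → Fin d → ℝ) (x : ℕ → Fin N → Ω → Fin d → ℝ)
    (M : ℕ → Ω → Fin d → ℝ)
    (hWmeas : ∀ n, Measurable (W n))
    (hxmeas : ∀ n i, Measurable (x n i))
    -- all scalar noise components (over time and coordinate) are independent,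
    -- each distributed as `N(0, h)`
    (hWindep : iIndepFun
      (fun (p : ℕ × Fin d) ω => W p.1 ω p.2) P)
    (hWlaw : ∀ n l, Measure.map (fun ω => W n ω l) P
      = gaussianReal 0 (Real.toNNReal h))
    -- `W_{h,n}` is independent of `σ(x_0^1, …, x_0^N, W_{h,0}, …, W_{h,n−1})`
    (hWpast : ∀ n, Indep (MeasurableSpace.comap (W n) inferInstance)
      ((⨆ i : Fin N, MeasurableSpace.comap (x 0 i) inferInstance) ⊔
        (⨆ k : Fin n, MeasurableSpace.comap (W k) inferInstance)) P)
    -- `M_n` is measurable w.r.t. `σ(x_0^1, …, x_0^N, W_{h,0}, …, W_{h,n−1})`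
    (hMmeas : ∀ n, @Measurable Ω (Fin d → ℝ)
      ((⨆ i : Fin N, MeasurableSpace.comap (x 0 i) inferInstance) ⊔
        (⨆ k : Fin n, MeasurableSpace.comap (W k) inferInstance)) _ (M n))
    -- the Ad-CBO recursion
    (hrec : ∀ n i ω l,
      x (n+1) i ω l = x n i ω l - lam0 * h * (x n i ω l - M n ω l)
        - lam1 * h * ((1 / (N : ℝ)) * ∑ j, x n j ω l - M n ω l)
        - sigma * (x n i ω l - M n ω l) * W n ω l)
    -- finite second moments of the initial data
    (hint : ∀ i j : Fin N,
      Integrable (fun ω => ∑ l, (x 0 i ω l - x 0 j ω l) ^ 2) P) :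
    ∀ (n : ℕ) (i j : Fin N),
      ∫ ω, ∑ l, (x (n+1) i ω l - x (n+1) j ω l) ^ 2 ∂P
        = (1 - h * (2 * lam0 - lam0 ^ 2 * h - sigma ^ 2))
          * ∫ ω, ∑ l, (x n i ω l - x n j ω l) ^ 2 ∂P := by
  intro n i j
  classical
  let F : ℕ → MeasurableSpace Ω := fun m =>
    (⨆ i' : Fin N, MeasurableSpace.comap (x 0 i') inferInstance) ⊔
      (⨆ k : Fin m, MeasurableSpace.comap (W k) inferInstance)
  have hFmono : ∀ m, F m ≤ F (m+1) := fun m =>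
    sup_le le_sup_left (iSup_le fun k =>
      (le_iSup (fun k' : Fin (m+1) => MeasurableSpace.comap (W k') inferInstance)
        ⟨k.1, Nat.lt_succ_of_lt k.2⟩).trans le_sup_right)
  have hWF : ∀ m, MeasurableSpace.comap (W m) inferInstance ≤ F (m+1) := fun m =>
    (le_iSup (fun k : Fin (m+1) => MeasurableSpace.comap (W k) inferInstance)
      ⟨m, Nat.lt_succ_self m⟩).trans le_sup_right
  have hxF : ∀ m (i' : Fin N), Measurable[F m] (x m i') := by
    intro m
    induction m with
    | zero =>
      intro i'
      exact measurable_iff_comap_le.2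
        ((le_iSup (fun i'' : Fin N => MeasurableSpace.comap (x 0 i'') inferInstance) i').trans
          le_sup_left)
    | succ m ih =>
      intro i'
      have hWc : Measurable[F (m+1)] (W m) := measurable_iff_comap_le.2 (hWF m)
      have hMc : Measurable[F (m+1)] (M m) := (hMmeas m).mono (hFmono m) le_rfl
      have hxc : ∀ j', Measurable[F (m+1)] (x m j') := fun j' => (ih j').mono (hFmono m) le_rfl
      have hx1 : x (m+1) i' = fun ω l => x m i' ω l - lam0 * h * (x m i' ω l - M m ω l)
          - lam1 * h * ((1 / (N : ℝ)) * ∑ j', x m j' ω l - M m ω l)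
          - sigma * (x m i' ω l - M m ω l) * W m ω l :=
        funext fun ω => funext fun l => hrec m i' ω l
      rw [hx1]
      refine (@measurable_pi_iff Ω (Fin d) (fun _ => ℝ) (F (m+1)) _ _).2 fun l => ?_
      have ha : Measurable[F (m+1)] fun ω => x m i' ω l := (measurable_pi_apply l).comp (hxc i')
      have hM' : Measurable[F (m+1)] fun ω => M m ω l := (measurable_pi_apply l).comp hMc
      have hS : Measurable[F (m+1)] fun ω => ∑ j', x m j' ω l :=
        Finset.measurable_sum Finset.univ fun j' _ => (measurable_pi_apply l).comp (hxc j')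
      have hw : Measurable[F (m+1)] fun ω => W m ω l := (measurable_pi_apply l).comp hWc
      exact ((ha.sub ((ha.sub hM').const_mul (lam0 * h))).sub
        (((hS.const_mul (1 / (N:ℝ))).sub hM').const_mul (lam1 * h))).sub
        (((ha.sub hM').const_mul sigma).mul hw)
  have hIndepFG : ∀ m (f g : Ω → ℝ), Measurable[F m] f →
      Measurable[MeasurableSpace.comap (W m) inferInstance] g → IndepFun f g P := by
    intro m f g hf hg
    rw [IndepFun_iff_Indep, Indep_iff]
    intro t1 t2 h1 h2
    exact (Indep_iff _ _ _).1 (hWpast m).symm t1 t2 (hf.comap_le t1 h1) (hg.comap_le t2 h2)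
  set c : ℝ := 1 - lam0 * h with hc
  set κ : ℝ := 1 - h * (2 * lam0 - lam0 ^ 2 * h - sigma ^ 2) with hκ
  have hv : (Real.toNNReal h) ≠ 0 := by
    simp only [ne_eq, Real.toNNReal_eq_zero, not_le]
    exact hh
  have hgauss := aux_gaussian_sq hv c sigma
  have hcoe : ((Real.toNNReal h : ℝ≥0) : ℝ) = h := Real.coe_toNNReal h hh.le
  have hκval : c^2 + sigma^2 * h = κ := by rw [hc, hκ]; ring
  have hgm : Measurable (fun w : ℝ => (c - sigma * w)^2) :=
    (measurable_const.sub (measurable_const.mul measurable_id)).pow_const 2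
  have hWml : ∀ m l, Measurable fun ω => W m ω l := fun m l =>
    (measurable_pi_apply l).comp (hWmeas m)
  have hGintP : ∀ m l, Integrable (fun ω => (c - sigma * W m ω l)^2) P := by
    intro m l
    have h1 : Integrable (fun w : ℝ => (c - sigma*w)^2) (Measure.map (fun ω => W m ω l) P) := by
      rw [hWlaw m l]; exact hgauss.1
    have := (integrable_map_measure hgm.aestronglyMeasurable (hWml m l).aemeasurable).1 h1
    exact this
  have hGval : ∀ m l, ∫ ω, (c - sigma * W m ω l)^2 ∂P = κ := by
    intro m l
    have h1 : ∫ ω, (c - sigma * W m ω l)^2 ∂P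
        = ∫ w, (c - sigma*w)^2 ∂(Measure.map (fun ω => W m ω l) P) :=
      (integral_map (hWml m l).aemeasurable hgm.aestronglyMeasurable).symm
    rw [h1, hWlaw m l, hgauss.2, hcoe, hκval]
  have hDrec : ∀ m ω l, x (m+1) i ω l - x (m+1) j ω l
      = (x m i ω l - x m j ω l) * (c - sigma * W m ω l) := by
    intro m ω l
    rw [hrec m i ω l, hrec m j ω l, hc]
    ring
  have hfmeas : ∀ m l, Measurable[F m] fun ω => (x m i ω l - x m j ω l)^2 := fun m l =>
    (((measurable_pi_apply l).comp (hxF m i)).sub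
      ((measurable_pi_apply l).comp (hxF m j))).pow_const 2
  have hgmeasW : ∀ m l, Measurable[MeasurableSpace.comap (W m) inferInstance]
      fun ω => (c - sigma * W m ω l)^2 := by
    intro m l
    have hb : Measurable[MeasurableSpace.comap (W m) inferInstance] (W m) :=
      measurable_iff_comap_le.2 le_rfl
    exact (measurable_const.sub (((measurable_pi_apply l).comp hb).const_mul sigma)).pow_const 2
  have hindep : ∀ m l, IndepFun (fun ω => (x m i ω l - x m j ω l)^2)
      (fun ω => (c - sigma * W m ω l)^2) P := fun m l =>
    hIndepFG m _ _ (hfmeas m l) (hgmeasW m l)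
  have hprodeq : ∀ m l, (fun ω => (x (m+1) i ω l - x (m+1) j ω l)^2)
      = (fun ω => (x m i ω l - x m j ω l)^2) * (fun ω => (c - sigma * W m ω l)^2) := by
    intro m l
    funext ω
    simp only [Pi.mul_apply]
    rw [hDrec m ω l]
    ring
  have hIn : ∀ m, ∀ l, Integrable (fun ω => (x m i ω l - x m j ω l)^2) P := by
    intro m
    induction m with
    | zero =>
      intro l
      refine (hint i j).mono' ?_ ?_
      · exact ((((measurable_pi_apply l).comp (hxmeas 0 i)).sub
          ((measurable_pi_apply l).comp (hxmeas 0 j))).pow_const 2).aestronglyMeasurable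
      · refine Filter.Eventually.of_forall fun ω => ?_
        rw [Real.norm_eq_abs, abs_of_nonneg (sq_nonneg _)]
        exact Finset.single_le_sum (f := fun l' => (x 0 i ω l' - x 0 j ω l')^2) (fun l' _ => sq_nonneg _) (Finset.mem_univ l)
    | succ m ih =>
      intro l
      rw [hprodeq m l]
      exact (hindep m l).integrable_mul (ih l) (hGintP m l)
  have hstep : ∀ l, ∫ ω, (x (n+1) i ω l - x (n+1) j ω l)^2 ∂P
      = κ * ∫ ω, (x n i ω l - x n j ω l)^2 ∂P := by
    intro l
    rw [hprodeq n l, IndepFun.integral_mul_eq_mul_integral (hindep n l) (hIn n l).aestronglyMeasurable (hGintP n l).aestronglyMeasurable, hGval n l]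
    ring
  rw [integral_finset_sum _ fun l _ => hIn (n+1) l,
    integral_finset_sum _ fun l _ => hIn n l, Finset.mul_sum]
  exact Finset.sum_congr rfl fun l _ => hstep l
end

section
/- Suppose the initial data satisfy E‖x_0^i − x_0^j‖² < ∞ for all i, j ∈ {1,…,N}. Then for every n ∈ ℕ and all i, j ∈ {1,…,N}, E‖x_n^i − x_n^j‖² ≤ e^{−nh(2λ₀ − λ₀²h − σ²)} · E‖x_0^i − x_0^j‖². -/
open MeasureTheory ProbabilityTheory Filter

open scoped NNReal ENNReal

section AuxGaussLemmas
open Real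


lemma aux_int_mul_exp {b : ℝ} (hb : 0 < b) : ∫ x : ℝ, x * Real.exp (-b * x ^ 2) = 0 := by
  have hd : ∀ x : ℝ, HasDerivAt (fun y => -(2*b)⁻¹ * Real.exp (-b * y ^ 2))
      (x * Real.exp (-b * x ^ 2)) x := by
    intro x
    refine (((hasDerivAt_pow 2 x).const_mul (-b)).exp.const_mul (-(2*b)⁻¹)).congr_deriv ?_
    field_simp
    ring
  exact integral_eq_zero_of_hasDerivAt_of_integrable hd
    (integrable_mul_exp_neg_mul_sq hb) ((integrable_exp_neg_mul_sq hb).const_mul _)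

lemma aux_integrable_sq_exp {b : ℝ} (hb : 0 < b) :
    Integrable (fun x : ℝ => x ^ 2 * Real.exp (-b * x ^ 2)) := by
  have h2 : ∀ x : ℝ, x ^ (2:ℝ) = x ^ (2:ℕ) := fun x => by
    rw [show (2:ℝ) = ((2:ℕ):ℝ) by norm_num, Real.rpow_natCast]
  have := integrable_rpow_mul_exp_neg_mul_sq hb (s := 2) (by norm_num)
  simpa [h2] using this

lemma aux_int_sq_exp {b : ℝ} (hb : 0 < b) :
    ∫ x : ℝ, x ^ 2 * Real.exp (-b * x ^ 2) = Real.sqrt (π / b) / (2 * b) := by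
  have hint2 := aux_integrable_sq_exp hb
  have hint1 := (integrable_exp_neg_mul_sq hb).const_mul ((2*b)⁻¹)
  have hd : ∀ x : ℝ, HasDerivAt (fun y => -(2*b)⁻¹ * (y * Real.exp (-b * y ^ 2)))
      (x ^ 2 * Real.exp (-b * x ^ 2) - (2*b)⁻¹ * Real.exp (-b * x ^ 2)) x := by
    intro x
    have h1 : HasDerivAt (fun y : ℝ => y * Real.exp (-b * y ^ 2))
        (1 * Real.exp (-b * x ^ 2) + x * (Real.exp (-b * x ^ 2) * (-b * (2 * x ^ 1)))) x :=
      (hasDerivAt_id x).mul ((hasDerivAt_pow 2 x).const_mul (-b)).exp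
    refine (h1.const_mul (-(2*b)⁻¹)).congr_deriv ?_
    field_simp
    ring
  have h0 := integral_eq_zero_of_hasDerivAt_of_integrable hd
      (hint2.sub hint1) ((integrable_mul_exp_neg_mul_sq hb).const_mul _)
  rw [integral_sub hint2 hint1, integral_const_mul, integral_gaussian, sub_eq_zero] at h0
  rw [h0]; ring

lemma gauss_pdf_repr {v : ℝ≥0} (hv : v ≠ 0) (x : ℝ) :
    gaussianPDFReal 0 v x = (Real.sqrt (2*π*v))⁻¹ * Real.exp (-(2*(v:ℝ))⁻¹ * x^2) := by
  have hv' : (0:ℝ) < v := by positivity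
  rw [gaussianPDFReal]
  congr 1
  field_simp
  rw [sub_zero]

lemma gauss_integral_eq {v : ℝ≥0} (hv : v ≠ 0) (g : ℝ → ℝ) :
    ∫ w, g w ∂(gaussianReal 0 v) = ∫ x, gaussianPDFReal 0 v x * g x := by
  rw [gaussianReal_of_var_ne_zero 0 hv,
    show gaussianPDF 0 v = fun x => (((gaussianPDFReal 0 v x).toNNReal : ℝ≥0) : ℝ≥0∞) from rfl,
    integral_withDensity_eq_integral_smul ((measurable_gaussianPDFReal 0 v).real_toNNReal) g]
  refine integral_congr_ae (ae_of_all _ fun x => ?_)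
  simp [NNReal.smul_def, Real.coe_toNNReal _ (gaussianPDFReal_nonneg 0 v x)]

lemma gauss_integrable {v : ℝ≥0} (hv : v ≠ 0) {g : ℝ → ℝ}
    (hg : Integrable (fun x => gaussianPDFReal 0 v x * g x)) :
    Integrable g (gaussianReal 0 v) := by
  rw [gaussianReal_of_var_ne_zero 0 hv,
    show gaussianPDF 0 v = fun x => (((gaussianPDFReal 0 v x).toNNReal : ℝ≥0) : ℝ≥0∞) from rfl,
    integrable_withDensity_iff_integrable_smul ((measurable_gaussianPDFReal 0 v).real_toNNReal)]
  refine hg.congr (ae_of_all _ fun x => ?_)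
  simp [NNReal.smul_def, Real.coe_toNNReal _ (gaussianPDFReal_nonneg 0 v x)]

lemma gauss_int1 {v : ℝ≥0} (hv : v ≠ 0) : Integrable (fun w : ℝ => w) (gaussianReal 0 v) := by
  have hv' : (0:ℝ) < v := by positivity
  have hb : (0:ℝ) < (2*(v:ℝ))⁻¹ := by positivity
  refine gauss_integrable hv ?_
  have e : (fun x : ℝ => gaussianPDFReal 0 v x * x)
      = fun x => (Real.sqrt (2*π*v))⁻¹ * (x * Real.exp (-(2*(v:ℝ))⁻¹ * x^2)) := by
    funext x; rw [gauss_pdf_repr hv]; ring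
  rw [e]
  exact (integrable_mul_exp_neg_mul_sq hb).const_mul _

lemma gauss_mean {v : ℝ≥0} (hv : v ≠ 0) : ∫ w, w ∂(gaussianReal 0 v) = 0 := by
  have hv' : (0:ℝ) < v := by positivity
  have hb : (0:ℝ) < (2*(v:ℝ))⁻¹ := by positivity
  rw [gauss_integral_eq hv]
  have e : (fun x : ℝ => gaussianPDFReal 0 v x * x)
      = fun x => (Real.sqrt (2*π*v))⁻¹ * (x * Real.exp (-(2*(v:ℝ))⁻¹ * x^2)) := by
    funext x; rw [gauss_pdf_repr hv]; ring
  rw [e, integral_const_mul, aux_int_mul_exp hb, mul_zero]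

lemma gauss_int2 {v : ℝ≥0} (hv : v ≠ 0) : Integrable (fun w : ℝ => w^2) (gaussianReal 0 v) := by
  have hv' : (0:ℝ) < v := by positivity
  have hb : (0:ℝ) < (2*(v:ℝ))⁻¹ := by positivity
  refine gauss_integrable hv ?_
  have e : (fun x : ℝ => gaussianPDFReal 0 v x * x^2)
      = fun x => (Real.sqrt (2*π*v))⁻¹ * (x^2 * Real.exp (-(2*(v:ℝ))⁻¹ * x^2)) := by
    funext x; rw [gauss_pdf_repr hv]; ring
  rw [e]
  exact (aux_integrable_sq_exp hb).const_mul _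

lemma gauss_var {v : ℝ≥0} (hv : v ≠ 0) : ∫ w, w^2 ∂(gaussianReal 0 v) = v := by
  have hv' : (0:ℝ) < v := by positivity
  have hb : (0:ℝ) < (2*(v:ℝ))⁻¹ := by positivity
  rw [gauss_integral_eq hv]
  have e : (fun x : ℝ => gaussianPDFReal 0 v x * x^2)
      = fun x => (Real.sqrt (2*π*v))⁻¹ * (x^2 * Real.exp (-(2*(v:ℝ))⁻¹ * x^2)) := by
    funext x; rw [gauss_pdf_repr hv]; ring
  rw [e, integral_const_mul, aux_int_sq_exp hb]
  rw [show π / (2*(v:ℝ))⁻¹ = 2*π*(v:ℝ) by field_simp]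
  have hs : (0:ℝ) < Real.sqrt (2*π*v) := Real.sqrt_pos.mpr (by positivity)
  field_simp

lemma gauss_quad {v : ℝ≥0} (hv : v ≠ 0) (a s : ℝ) :
    Integrable (fun w => (a - s*w)^2) (gaussianReal 0 v) ∧
    ∫ w, (a - s*w)^2 ∂(gaussianReal 0 v) = a^2 + s^2*v := by
  have h1 := gauss_int1 hv
  have h2 := gauss_int2 hv
  have e : (fun w : ℝ => (a - s*w)^2) = fun w => a^2 + ((-2*a*s)*w + s^2*w^2) := by
    funext w; ring
  have hi : Integrable (fun w : ℝ => a^2 + ((-2*a*s)*w + s^2*w^2)) (gaussianReal 0 v) :=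
    (integrable_const _).add ((h1.const_mul _).add (h2.const_mul _))
  constructor
  · rw [e]; exact hi
  · have hg : Integrable (fun w : ℝ => -2*a*s*w + s^2*w^2) (gaussianReal 0 v) :=
      (h1.const_mul _).add (h2.const_mul _)
    rw [e, integral_add (integrable_const _) hg,
      integral_add (h1.const_mul _) (h2.const_mul _),
      integral_const_mul, integral_const_mul, gauss_mean hv, gauss_var hv, integral_const]
    simp

end AuxGaussLemmas

/-- Exponential decay of pairwise second moments for Ad-CBO:
`E‖x_n^i − x_n^j‖² ≤ e^{−nh(2λ₀ − λ₀²h − σ²)} E‖x_0^i − x_0^j‖²`. -/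
theorem adCBO_consensus_decay
    {Ω : Type*} [MeasurableSpace Ω] (P : Measure Ω) [IsProbabilityMeasure P]
    (d N : ℕ) (h lam0 lam1 sigma : ℝ)
    (hh : 0 < h) (hlam0 : 0 < lam0) (hlam1 : 0 ≤ lam1) (hsigma : 0 ≤ sigma)
    (W : ℕ → Ω → Fin d → ℝ) (x : ℕ → Fin N → Ω → Fin d → ℝ)
    (M : ℕ → Ω → Fin d → ℝ)
    (hWmeas : ∀ n, Measurable (W n))
    (hxmeas : ∀ n i, Measurable (x n i))
    -- all scalar noise components (over time and coordinate) are independent,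
    -- each distributed as `N(0, h)`
    (hWindep : iIndepFun
      (fun (p : ℕ × Fin d) ω => W p.1 ω p.2) P)
    (hWlaw : ∀ n l, Measure.map (fun ω => W n ω l) P
      = gaussianReal 0 (Real.toNNReal h))
    -- `W_{h,n}` is independent of `σ(x_0^1, …, x_0^N, W_{h,0}, …, W_{h,n−1})`
    (hWpast : ∀ n, Indep (MeasurableSpace.comap (W n) inferInstance)
      ((⨆ i : Fin N, MeasurableSpace.comap (x 0 i) inferInstance) ⊔
        (⨆ k : Fin n, MeasurableSpace.comap (W k) inferInstance)) P)
    -- `M_n` is measurable w.r.t. `σ(x_0^1, …, x_0^N, W_{h,0}, …, W_{h,n−1})`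
    (hMmeas : ∀ n, @Measurable Ω (Fin d → ℝ)
      ((⨆ i : Fin N, MeasurableSpace.comap (x 0 i) inferInstance) ⊔
        (⨆ k : Fin n, MeasurableSpace.comap (W k) inferInstance)) _ (M n))
    -- the Ad-CBO recursion
    (hrec : ∀ n i ω l,
      x (n+1) i ω l = x n i ω l - lam0 * h * (x n i ω l - M n ω l)
        - lam1 * h * ((1 / (N : ℝ)) * ∑ j, x n j ω l - M n ω l)
        - sigma * (x n i ω l - M n ω l) * W n ω l)
    -- finite second moments of the initial data
    (hint : ∀ i j : Fin N,
      Integrable (fun ω => ∑ l, (x 0 i ω l - x 0 j ω l) ^ 2) P) :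
    ∀ (n : ℕ) (i j : Fin N),
      ∫ ω, ∑ l, (x n i ω l - x n j ω l) ^ 2 ∂P
        ≤ Real.exp (-(n : ℝ) * h * (2 * lam0 - lam0 ^ 2 * h - sigma ^ 2))
          * ∫ ω, ∑ l, (x 0 i ω l - x 0 j ω l) ^ 2 ∂P := by
  
  intro n i j
  -- the filtration
  set G : ℕ → MeasurableSpace Ω := fun n =>
    (⨆ i : Fin N, MeasurableSpace.comap (x 0 i) inferInstance) ⊔
      (⨆ k : Fin n, MeasurableSpace.comap (W k) inferInstance) with hG
  have hvne : (Real.toNNReal h) ≠ 0 := by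
    simp only [ne_eq, Real.toNNReal_eq_zero, not_le]
    exact hh
  have hvcoe : ((Real.toNNReal h : ℝ≥0) : ℝ) = h := Real.coe_toNNReal _ hh.le
  set c : ℝ := (1 - lam0*h)^2 + sigma^2*h with hcdef
  have hc0 : 0 ≤ c := by positivity
  -- the quadratic function of the noise
  set φ : ℝ → ℝ := fun w => (1 - lam0*h - sigma*w)^2 with hφdef
  have hφm : Measurable φ := by fun_prop
  have hφint : Integrable φ (gaussianReal 0 (Real.toNNReal h)) := by
    have := (gauss_quad hvne (1 - lam0*h) sigma).1
    refine this.congr (ae_of_all _ fun w => ?_)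
    simp only [hφdef]
  have hφval : ∫ w, φ w ∂(gaussianReal 0 (Real.toNNReal h)) = c := by
    have h2 := (gauss_quad hvne (1 - lam0*h) sigma).2
    have e : φ = fun w => (1 - lam0*h - sigma*w)^2 := rfl
    calc ∫ w, φ w ∂(gaussianReal 0 (Real.toNNReal h)) = (1 - lam0*h)^2 + sigma^2*(Real.toNNReal h : ℝ) := h2
      _ = c := by rw [hvcoe]
  -- the key induction
  have key : ∀ m : ℕ,
      (∀ l, @Measurable Ω ℝ (G m) _ (fun ω => x m i ω l - x m j ω l)) ∧
      (∀ l, Integrable (fun ω => (x m i ω l - x m j ω l)^2) P) ∧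
      (∀ l, ∫ ω, (x m i ω l - x m j ω l)^2 ∂P
        = c ^ m * ∫ ω, (x 0 i ω l - x 0 j ω l)^2 ∂P) := by
    intro m
    induction m with
    | zero =>
      refine ⟨fun l => ?_, fun l => ?_, fun l => by simp⟩
      · have h1 : @Measurable Ω (Fin d → ℝ)
            (MeasurableSpace.comap (x 0 i) inferInstance) _ (x 0 i) :=
          Measurable.of_comap_le le_rfl
        have h2 : @Measurable Ω (Fin d → ℝ)
            (MeasurableSpace.comap (x 0 j) inferInstance) _ (x 0 j) :=
          Measurable.of_comap_le le_rfl
        have hle1 : MeasurableSpace.comap (x 0 i) inferInstance ≤ G 0 :=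
          le_trans (le_iSup (fun i : Fin N => MeasurableSpace.comap (x 0 i) inferInstance) i)
            le_sup_left
        have hle2 : MeasurableSpace.comap (x 0 j) inferInstance ≤ G 0 :=
          le_trans (le_iSup (fun i : Fin N => MeasurableSpace.comap (x 0 i) inferInstance) j)
            le_sup_left
        exact (((measurable_pi_apply l).comp h1).mono hle1 le_rfl).sub
          (((measurable_pi_apply l).comp h2).mono hle2 le_rfl)
      · refine (hint i j).mono' ?_ (ae_of_all _ fun ω => ?_)
        · exact ((((measurable_pi_apply l).comp (hxmeas 0 i)).sub
            ((measurable_pi_apply l).comp (hxmeas 0 j))).pow_const 2).aestronglyMeasurable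
        · rw [Real.norm_eq_abs, abs_of_nonneg (sq_nonneg _)]
          exact Finset.single_le_sum (fun m _ => sq_nonneg (x 0 i ω m - x 0 j ω m)) (Finset.mem_univ l)
    | succ m ih =>
      obtain ⟨ihm, ihi, ihv⟩ := ih
      have hGmono : G m ≤ G (m+1) := by
        refine sup_le_sup_left (iSup_le fun k => ?_) _
        exact le_iSup (fun k : Fin (m+1) => MeasurableSpace.comap (W (k : ℕ)) inferInstance)
          (Fin.castSucc k)
      have hWG : MeasurableSpace.comap (W m) inferInstance ≤ G (m+1) :=
        le_trans (le_iSup (fun k : Fin (m+1) => MeasurableSpace.comap (W (k : ℕ)) inferInstance)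
          (Fin.last m)) le_sup_right
      have hzrec : ∀ l ω, x (m+1) i ω l - x (m+1) j ω l
          = (1 - lam0*h - sigma * W m ω l) * (x m i ω l - x m j ω l) := by
        intro l ω
        rw [hrec m i ω l, hrec m j ω l]
        ring
      -- measurability of the noise components
      have huGm : ∀ l, @Measurable Ω ℝ (G (m+1)) _ (fun ω => W m ω l) := fun l =>
        ((measurable_pi_apply l).comp
          (Measurable.of_comap_le le_rfl :
            @Measurable Ω (Fin d → ℝ) (MeasurableSpace.comap (W m) inferInstance) _ (W m))).mono
          hWG le_rfl
      have hu : ∀ l, Measurable (fun ω => W m ω l) := fun l =>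
        (measurable_pi_apply l).comp (hWmeas m)
      -- independence
      have hindep : ∀ l, IndepFun (fun ω => W m ω l) (fun ω => x m i ω l - x m j ω l) P := by
        intro l
        have hle1 : MeasurableSpace.comap (fun ω => W m ω l) inferInstance
            ≤ MeasurableSpace.comap (W m) inferInstance := by
          rw [show (fun ω => W m ω l) = (fun v : Fin d → ℝ => v l) ∘ W m from rfl,
            ← MeasurableSpace.comap_comp]
          exact MeasurableSpace.comap_mono (measurable_pi_apply l).comap_le
        have hle2 : MeasurableSpace.comap (fun ω => x m i ω l - x m j ω l) inferInstance
            ≤ G m := (ihm l).comap_le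
        exact indep_of_indep_of_le_right (indep_of_indep_of_le_left (hWpast m) hle1) hle2
      -- integrability of the quadratic noise factor, and its mean
      have hFint : ∀ l, Integrable (fun ω => φ (W m ω l)) P := by
        intro l
        have h1 : Integrable (φ ∘ fun ω => W m ω l) P := by
          rw [← integrable_map_measure hφm.aestronglyMeasurable (hu l).aemeasurable, hWlaw m l]
          exact hφint
        simpa [Function.comp_def] using h1
      have hFval : ∀ l, ∫ ω, φ (W m ω l) ∂P = c := by
        intro l
        rw [← hφval, ← hWlaw m l, integral_map (hu l).aemeasurable hφm.aestronglyMeasurable]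
      refine ⟨fun l => ?_, fun l => ?_, fun l => ?_⟩
      · have e : (fun ω => x (m+1) i ω l - x (m+1) j ω l)
            = fun ω => (1 - lam0*h - sigma * W m ω l) * (x m i ω l - x m j ω l) := by
          funext ω; exact hzrec l ω
        rw [e]
        exact (measurable_const.sub ((huGm l).const_mul sigma)).mul ((ihm l).mono hGmono le_rfl)
      · have e : (fun ω => (x (m+1) i ω l - x (m+1) j ω l)^2)
            = fun ω => φ (W m ω l) * (x m i ω l - x m j ω l)^2 := by
          funext ω; rw [hzrec l ω]; simp only [hφdef]; ring
        rw [e]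
        have := ((hindep l).comp hφm (measurable_id.pow_const 2)).integrable_mul
          (hFint l) (ihi l)
        exact this
      · have e : (fun ω => (x (m+1) i ω l - x (m+1) j ω l)^2)
            = fun ω => φ (W m ω l) * (x m i ω l - x m j ω l)^2 := by
          funext ω; rw [hzrec l ω]; simp only [hφdef]; ring
        have hmul := ((hindep l).comp hφm (measurable_id.pow_const 2)).integral_mul_eq_mul_integral
          (hFint l).aestronglyMeasurable (ihi l).aestronglyMeasurable
        simp only [Function.comp_def] at hmul
        calc ∫ ω, (x (m+1) i ω l - x (m+1) j ω l)^2 ∂P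
            = ∫ ω, φ (W m ω l) * (x m i ω l - x m j ω l)^2 ∂P := by rw [e]
          _ = (∫ ω, φ (W m ω l) ∂P) * ∫ ω, (x m i ω l - x m j ω l)^2 ∂P := hmul
          _ = c * (c ^ m * ∫ ω, (x 0 i ω l - x 0 j ω l)^2 ∂P) := by rw [hFval l, ihv l]
          _ = c ^ (m+1) * ∫ ω, (x 0 i ω l - x 0 j ω l)^2 ∂P := by ring
  -- assemble
  obtain ⟨-, hI, hV⟩ := key n
  have hI0 := (key 0).2.1
  have hsumn : ∫ ω, ∑ l, (x n i ω l - x n j ω l)^2 ∂P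
      = ∑ l, ∫ ω, (x n i ω l - x n j ω l)^2 ∂P :=
    integral_finset_sum _ (fun l _ => hI l)
  have hsum0 : ∫ ω, ∑ l, (x 0 i ω l - x 0 j ω l)^2 ∂P
      = ∑ l, ∫ ω, (x 0 i ω l - x 0 j ω l)^2 ∂P :=
    integral_finset_sum _ (fun l _ => hI0 l)
  have hA : 0 ≤ ∫ ω, ∑ l, (x 0 i ω l - x 0 j ω l)^2 ∂P :=
    integral_nonneg fun ω => Finset.sum_nonneg fun l _ => sq_nonneg _
  have hce : c ≤ Real.exp (-(h * (2*lam0 - lam0^2*h - sigma^2))) := by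
    have := Real.add_one_le_exp (-(h * (2*lam0 - lam0^2*h - sigma^2)))
    calc c = -(h * (2*lam0 - lam0^2*h - sigma^2)) + 1 := by rw [hcdef]; ring
      _ ≤ _ := this
  have hcn : c ^ n ≤ Real.exp (-(n : ℝ) * h * (2*lam0 - lam0^2*h - sigma^2)) := by
    calc c ^ n ≤ (Real.exp (-(h * (2*lam0 - lam0^2*h - sigma^2)))) ^ n :=
        pow_le_pow_left₀ hc0 hce n
      _ = Real.exp (-(n : ℝ) * h * (2*lam0 - lam0^2*h - sigma^2)) := by
        rw [← Real.exp_nat_mul]; congr 1; ring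
  calc ∫ ω, ∑ l, (x n i ω l - x n j ω l)^2 ∂P
      = c ^ n * ∫ ω, ∑ l, (x 0 i ω l - x 0 j ω l)^2 ∂P := by
        rw [hsumn, hsum0, Finset.mul_sum]
        exact Finset.sum_congr rfl fun l _ => hV l
    _ ≤ Real.exp (-(n : ℝ) * h * (2*lam0 - lam0^2*h - sigma^2))
        * ∫ ω, ∑ l, (x 0 i ω l - x 0 j ω l)^2 ∂P :=
        mul_le_mul_of_nonneg_right hcn hA
end

section
/- Pathwise (for every sample point ω), for every n ∈ ℕ, every coordinate l ∈ {1,…,d}, and every i ∈ {1,…,N}, one has x_n^{i,l} − x̄_n^l = (∏_{k=0}^{n−1} (1 − λ₀h − σ W_{h,k}^l)) · (x_0^{i,l} − x̄_0^l), where x̄_n^l denotes the l-th component of the ensemble mean x̄_n. -/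
open MeasureTheory ProbabilityTheory Filter

/-- Pathwise deviation-from-mean identity for Ad-CBO. -/
theorem adCBO_pathwise_deviation
    {Ω : Type*} [MeasurableSpace Ω] (P : Measure Ω) [IsProbabilityMeasure P]
    (d N : ℕ) (h lam0 lam1 sigma : ℝ)
    (hh : 0 < h) (hlam0 : 0 < lam0) (hlam1 : 0 ≤ lam1) (hsigma : 0 ≤ sigma)
    (W : ℕ → Ω → Fin d → ℝ) (x : ℕ → Fin N → Ω → Fin d → ℝ)
    (M : ℕ → Ω → Fin d → ℝ)
    (hWmeas : ∀ n, Measurable (W n))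
    (hxmeas : ∀ n i, Measurable (x n i))
    -- all scalar noise components (over time and coordinate) are independent,
    -- each distributed as `N(0, h)`
    (hWindep : iIndepFun
      (fun (p : ℕ × Fin d) ω => W p.1 ω p.2) P)
    (hWlaw : ∀ n l, Measure.map (fun ω => W n ω l) P
      = gaussianReal 0 (Real.toNNReal h))
    -- `W_{h,n}` is independent of `σ(x_0^1, …, x_0^N, W_{h,0}, …, W_{h,n−1})`
    (hWpast : ∀ n, Indep (MeasurableSpace.comap (W n) inferInstance)
      ((⨆ i : Fin N, MeasurableSpace.comap (x 0 i) inferInstance) ⊔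
        (⨆ k : Fin n, MeasurableSpace.comap (W k) inferInstance)) P)
    -- `M_n` is measurable w.r.t. `σ(x_0^1, …, x_0^N, W_{h,0}, …, W_{h,n−1})`
    (hMmeas : ∀ n, @Measurable Ω (Fin d → ℝ)
      ((⨆ i : Fin N, MeasurableSpace.comap (x 0 i) inferInstance) ⊔
        (⨆ k : Fin n, MeasurableSpace.comap (W k) inferInstance)) _ (M n))
    -- the Ad-CBO recursion
    (hrec : ∀ n i ω l,
      x (n+1) i ω l = x n i ω l - lam0 * h * (x n i ω l - M n ω l)
        - lam1 * h * ((1 / (N : ℝ)) * ∑ j, x n j ω l - M n ω l)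
        - sigma * (x n i ω l - M n ω l) * W n ω l)
    :
    ∀ (ω : Ω) (n : ℕ) (l : Fin d) (i : Fin N),
      x n i ω l - (1 / (N : ℝ)) * ∑ j, x n j ω l
        = (∏ k ∈ Finset.range n, (1 - lam0 * h - sigma * W k ω l))
          * (x 0 i ω l - (1 / (N : ℝ)) * ∑ j, x 0 j ω l) := by
  intro ω n l i
  induction n with
  | zero => simp
  | succ n ih =>
    have hN : (N : ℝ) ≠ 0 := Nat.cast_ne_zero.mpr i.pos.ne'
    have key : ∀ j : Fin N, x (n+1) j ω l
        = (1 - lam0 * h - sigma * W n ω l) * x n j ω l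
          + ((lam0 * h + lam1 * h + sigma * W n ω l) * M n ω l
            - lam1 * h * ((1 / (N : ℝ)) * ∑ j', x n j' ω l)) := fun j => by
      rw [hrec n j ω l]; ring
    have hs : ∑ j, x (n+1) j ω l
        = (1 - lam0 * h - sigma * W n ω l) * (∑ j, x n j ω l)
          + (N : ℝ) * ((lam0 * h + lam1 * h + sigma * W n ω l) * M n ω l
            - lam1 * h * ((1 / (N : ℝ)) * ∑ j', x n j' ω l)) := by
      simp [key, Finset.sum_add_distrib, ← Finset.mul_sum, Finset.sum_const,
        Finset.card_univ, nsmul_eq_mul]; ring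
    calc x (n+1) i ω l - (1 / (N : ℝ)) * ∑ j, x (n+1) j ω l
        = (1 - lam0 * h - sigma * W n ω l)
          * (x n i ω l - (1 / (N : ℝ)) * ∑ j, x n j ω l) := by
          rw [key i, hs]; field_simp; ring
      _ = (∏ k ∈ Finset.range (n+1), (1 - lam0 * h - sigma * W k ω l))
          * (x 0 i ω l - (1 / (N : ℝ)) * ∑ j, x 0 j ω l) := by
          rw [ih, Finset.prod_range_succ]; ring
end

section
/- Pathwise (for every sample point ω), for every n ∈ ℕ and every coordinate l ∈ {1,…,d}, one has max_{i,j∈{1,…,N}} |x_n^{i,l} − x_n^{j,l}| = (∏_{k=0}^{n−1} |1 − λ₀h − σ W_{h,k}^l|) · max_{i,j∈{1,…,N}} |x_0^{i,l} − x_0^{j,l}| (the absolute values are necessary since the random scaling factor 1 − λ₀h − σ W_{h,k}^l may take either sign). -/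
open MeasureTheory ProbabilityTheory Filter

/-- Pathwise identity for the coordinatewise diameter of the swarm. -/
theorem adCBO_pathwise_diameter
    {Ω : Type*} [MeasurableSpace Ω] (P : Measure Ω) [IsProbabilityMeasure P]
    (d N : ℕ) (h lam0 lam1 sigma : ℝ)
    (hN : 0 < N) (hh : 0 < h) (hlam0 : 0 < lam0) (hlam1 : 0 ≤ lam1) (hsigma : 0 ≤ sigma)
    (W : ℕ → Ω → Fin d → ℝ) (x : ℕ → Fin N → Ω → Fin d → ℝ)
    (M : ℕ → Ω → Fin d → ℝ)
    (hWmeas : ∀ n, Measurable (W n))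
    (hxmeas : ∀ n i, Measurable (x n i))
    -- all scalar noise components (over time and coordinate) are independent,
    -- each distributed as `N(0, h)`
    (hWindep : iIndepFun
      (fun (p : ℕ × Fin d) ω => W p.1 ω p.2) P)
    (hWlaw : ∀ n l, Measure.map (fun ω => W n ω l) P
      = gaussianReal 0 (Real.toNNReal h))
    -- `W_{h,n}` is independent of `σ(x_0^1, …, x_0^N, W_{h,0}, …, W_{h,n−1})`
    (hWpast : ∀ n, Indep (MeasurableSpace.comap (W n) inferInstance)
      ((⨆ i : Fin N, MeasurableSpace.comap (x 0 i) inferInstance) ⊔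
        (⨆ k : Fin n, MeasurableSpace.comap (W k) inferInstance)) P)
    -- `M_n` is measurable w.r.t. `σ(x_0^1, …, x_0^N, W_{h,0}, …, W_{h,n−1})`
    (hMmeas : ∀ n, @Measurable Ω (Fin d → ℝ)
      ((⨆ i : Fin N, MeasurableSpace.comap (x 0 i) inferInstance) ⊔
        (⨆ k : Fin n, MeasurableSpace.comap (W k) inferInstance)) _ (M n))
    -- the Ad-CBO recursion
    (hrec : ∀ n i ω l,
      x (n+1) i ω l = x n i ω l - lam0 * h * (x n i ω l - M n ω l)
        - lam1 * h * ((1 / (N : ℝ)) * ∑ j, x n j ω l - M n ω l)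
        - sigma * (x n i ω l - M n ω l) * W n ω l)
    :
    ∀ (ω : Ω) (n : ℕ) (l : Fin d),
      (⨆ i : Fin N, ⨆ j : Fin N, |x n i ω l - x n j ω l|)
        = (∏ k ∈ Finset.range n, |1 - lam0 * h - sigma * W k ω l|)
          * ⨆ i : Fin N, ⨆ j : Fin N, |x 0 i ω l - x 0 j ω l| := by
  haveI : Nonempty (Fin N) := ⟨⟨0, hN⟩⟩
  intro ω n l
  induction n with
  | zero => simp
  | succ n ih =>
    have key : ∀ i j : Fin N, |x (n+1) i ω l - x (n+1) j ω l|
        = |1 - lam0 * h - sigma * W n ω l| * |x n i ω l - x n j ω l| := by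
      intro i j
      rw [← abs_mul]
      congr 1
      rw [hrec n i ω l, hrec n j ω l]
      ring
    have hc : (0:ℝ) ≤ |1 - lam0 * h - sigma * W n ω l| := abs_nonneg _
    calc (⨆ i : Fin N, ⨆ j : Fin N, |x (n+1) i ω l - x (n+1) j ω l|)
        = ⨆ i : Fin N, ⨆ j : Fin N,
            |1 - lam0 * h - sigma * W n ω l| * |x n i ω l - x n j ω l| := by
          simp only [key]
      _ = |1 - lam0 * h - sigma * W n ω l|
            * ⨆ i : Fin N, ⨆ j : Fin N, |x n i ω l - x n j ω l| := by
          rw [Real.mul_iSup_of_nonneg hc]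
          exact iSup_congr fun i => (Real.mul_iSup_of_nonneg hc _).symm
      _ = (∏ k ∈ Finset.range (n+1), |1 - lam0 * h - sigma * W k ω l|)
            * ⨆ i : Fin N, ⨆ j : Fin N, |x 0 i ω l - x 0 j ω l| := by
          rw [ih, Finset.prod_range_succ]; ring
end

section
/- Suppose h > 0, 0 < λ₀h < 1, σ > 0, and σ√h < (1 − λ₀h)/y*, where y* is the unique positive root of g(y) := (1/y)√(π/2) exp(−y²/2) + erf(y/√2) − 1/(1 − λ₀h). Then for a Gaussian random variable η_h ~ N(0,h), E|1 − λ₀h + σ η_h| < 1. -/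
open scoped NNReal ENNReal
open MeasureTheory ProbabilityTheory Real Set Filter

/-- The Gauss error function `erf t = (2/√π) ∫_0^t e^{−u²} du`. -/
noncomputable def erf (t : ℝ) : ℝ :=
  (2 / Real.sqrt Real.pi) * ∫ u in (0:ℝ)..t, Real.exp (-u ^ 2)

lemma integrable_exp_neg_sq : Integrable (fun u : ℝ => Real.exp (-u ^ 2)) := by
  simpa using integrable_exp_neg_mul_sq (one_pos (α := ℝ))

lemma erf_continuous : Continuous erf := by
  unfold erf
  exact continuous_const.mul
    (intervalIntegral.continuous_primitive (fun a b => integrable_exp_neg_sq.intervalIntegrable) 0)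

lemma erf_le_one {t : ℝ} (ht : 0 ≤ t) : erf t ≤ 1 := by
  have hπ : (0:ℝ) < Real.sqrt π := Real.sqrt_pos.mpr Real.pi_pos
  have h1 : ∫ u in (0:ℝ)..t, Real.exp (-u ^ 2) ≤ Real.sqrt π / 2 := by
    rw [intervalIntegral.integral_of_le ht]
    have h2 : ∫ u in Ioc (0:ℝ) t, Real.exp (-u ^ 2) ≤ ∫ u in Ioi (0:ℝ), Real.exp (-u ^ 2) := by
      apply setIntegral_mono_set integrable_exp_neg_sq.integrableOn
        (ae_of_all _ fun x => (Real.exp_pos _).le)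
      exact HasSubset.Subset.eventuallyLE Ioc_subset_Ioi_self
    have h3 : ∫ u in Ioi (0:ℝ), Real.exp (-u ^ 2) = Real.sqrt π / 2 := by
      simpa using integral_gaussian_Ioi 1
    linarith
  unfold erf
  rw [div_mul_eq_mul_div, div_le_one hπ]
  linarith

/-- `g(y) = (1/y)√(π/2) exp(−y²/2) + erf(y/√2) − 1/(1−a)`. -/
noncomputable def gfun (a y : ℝ) : ℝ :=
  (1 / y) * Real.sqrt (Real.pi / 2) * Real.exp (-y ^ 2 / 2)
    + erf (y / Real.sqrt 2) - 1 / (1 - a)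

lemma gfun_neg {a y ystar : ℝ} (ha0 : 0 < a) (ha1 : a < 1) (hystar : 0 < ystar)
    (huniq : ∀ z : ℝ, 0 < z → gfun a z = 0 → z = ystar)
    (hy : ystar < y) : gfun a y < 0 := by
  by_contra hge
  push_neg at hge
  have hy0 : 0 < y := hystar.trans hy
  have hsq : (0:ℝ) < Real.sqrt (π/2) := Real.sqrt_pos.mpr (by positivity)
  set Y : ℝ := max (y+1) (Real.sqrt (π/2) * (1-a)/a) with hYdef
  have hyY : y < Y := lt_of_lt_of_le (by linarith) (le_max_left _ _)
  have hY0 : 0 < Y := hy0.trans hyY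
  have hY2 : Real.sqrt (π/2) * (1-a)/a ≤ Y := le_max_right _ _
  have hgY : gfun a Y < 0 := by
    have hb1 : (1/Y) * Real.sqrt (π/2) * Real.exp (-Y^2/2) < (1/Y) * Real.sqrt (π/2) := by
      have he : Real.exp (-Y^2/2) < 1 := Real.exp_lt_one_iff.mpr (by nlinarith)
      nlinarith [mul_pos (by positivity : (0:ℝ) < 1/Y) hsq]
    have hb2 : erf (Y / Real.sqrt 2) ≤ 1 := erf_le_one (by positivity)
    have hb3 : (1/Y) * Real.sqrt (π/2) ≤ a/(1-a) := by
      rw [one_div_mul_eq_div, div_le_div_iff₀ hY0 (by linarith)]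
      have := (div_le_iff₀ ha0).mp hY2
      nlinarith
    have hne : (1:ℝ) - a ≠ 0 := by linarith
    have halg : a/(1-a) + 1 - 1/(1-a) = 0 := by field_simp; ring
    unfold gfun
    linarith
  have hcont : ContinuousOn (gfun a) (Icc y Y) := by
    unfold gfun
    refine ContinuousOn.sub (ContinuousOn.add ?_ ?_) continuousOn_const
    · refine ContinuousOn.mul (ContinuousOn.mul ?_ continuousOn_const) ?_
      · exact continuousOn_const.div continuousOn_id
          (fun t ht => ne_of_gt (lt_of_lt_of_le hy0 ht.1))
      · exact (Real.continuous_exp.comp (((continuous_pow 2).neg).div_const 2)).continuousOn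
    · exact (erf_continuous.comp (continuous_id.div_const _)).continuousOn
  obtain ⟨c, hcmem, hc0⟩ := intermediate_value_Icc' hyY.le hcont
    (show (0:ℝ) ∈ Icc (gfun a Y) (gfun a y) from ⟨hgY.le, hge⟩)
  have := huniq c (hy0.trans_le hcmem.1) hc0
  have : ystar < c := hy.trans_le hcmem.1
  linarith [huniq c (hy0.trans_le hcmem.1) hc0]

section integrals
variable {h : ℝ}

lemma int_exp (hh : 0 < h) : Integrable (fun x : ℝ => Real.exp (-x^2/(2*h))) := by
  refine (integrable_exp_neg_mul_sq (b := (2*h)⁻¹) (by positivity)).congr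
    (ae_of_all _ fun x => ?_)
  simp only [neg_mul, inv_mul_eq_div, neg_div]

lemma int_xexp (hh : 0 < h) : Integrable (fun x : ℝ => x * Real.exp (-x^2/(2*h))) := by
  refine (integrable_mul_exp_neg_mul_sq (b := (2*h)⁻¹) (by positivity)).congr
    (ae_of_all _ fun x => ?_)
  simp only [neg_mul, inv_mul_eq_div, neg_div]

lemma tendsto_exp_aux (hh : 0 < h) :
    Tendsto (fun x : ℝ => Real.exp (-x^2/(2*h))) atTop (nhds 0) := by
  apply Real.tendsto_exp_atBot.comp
  have h1 : Tendsto (fun x : ℝ => x^2/(2*h)) atTop atTop :=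
    (tendsto_pow_atTop two_ne_zero).atTop_div_const (by positivity)
  rw [show (fun x : ℝ => -x^2/(2*h)) = fun x : ℝ => -(x^2/(2*h)) by funext x; ring]
  exact tendsto_neg_atBot_iff.mpr h1

lemma ftc_tail (hh : 0 < h) (m : ℝ) :
    ∫ x in Ioi m, x * Real.exp (-x^2/(2*h)) = h * Real.exp (-m^2/(2*h)) := by
  have hder : ∀ x ∈ Ici m, HasDerivAt (fun x : ℝ => -h * Real.exp (-x^2/(2*h)))
      (x * Real.exp (-x^2/(2*h))) x := by
    intro x _
    have H := (((hasDerivAt_pow 2 x).neg.div_const (2*h)).exp).const_mul (-h)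
    refine H.congr_deriv ?_
    simp only [Pi.neg_apply]
    field_simp
    ring
  have := integral_Ioi_of_hasDerivAt_of_tendsto' hder (int_xexp hh).integrableOn
    (by simpa using (tendsto_exp_aux hh).const_mul (-h))
  rw [this]; ring

lemma half_int (hh : 0 < h) :
    ∫ x in Ioi (0:ℝ), Real.exp (-x^2/(2*h)) = Real.sqrt (2*π*h) / 2 := by
  have := integral_gaussian_Ioi (2*h)⁻¹
  rw [show π / (2*h)⁻¹ = 2*π*h by field_simp] at this
  rw [← this]
  apply setIntegral_congr_fun measurableSet_Ioi
  intro x _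
  simp only [neg_mul, inv_mul_eq_div, neg_div]

lemma seg_int (hh : 0 < h) {m : ℝ} (hm : 0 ≤ m) :
    ∫ x in (0:ℝ)..m, Real.exp (-x^2/(2*h))
      = Real.sqrt (2*h) * (Real.sqrt π / 2) * erf (m / Real.sqrt (2*h)) := by
  have h2h : (0:ℝ) < Real.sqrt (2*h) := Real.sqrt_pos.mpr (by positivity)
  have hrw : ∀ x : ℝ, Real.exp (-x^2/(2*h))
      = (fun u : ℝ => Real.exp (-u^2)) ((Real.sqrt (2*h))⁻¹ * x) := by
    intro x
    simp only
    rw [mul_pow, inv_pow, Real.sq_sqrt (by positivity : (0:ℝ) ≤ 2*h)]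
    simp only [neg_mul, inv_mul_eq_div, neg_div]
  rw [intervalIntegral.integral_congr (fun x _ => hrw x),
    intervalIntegral.integral_comp_mul_left (fun u : ℝ => Real.exp (-u^2)) (ne_of_gt (by positivity : (0:ℝ) < (Real.sqrt (2*h))⁻¹))]
  have hπ : Real.sqrt π ≠ 0 := ne_of_gt (Real.sqrt_pos.mpr Real.pi_pos)
  have herf : ∀ t : ℝ, ∫ u in (0:ℝ)..t, Real.exp (-u^2) = Real.sqrt π / 2 * erf t := by
    intro t
    unfold erf
    field_simp
  rw [inv_inv, mul_zero, inv_mul_eq_div, herf, smul_eq_mul]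
  ring

end integrals

lemma gauss_abs {h b σ : ℝ} (hh : 0 < h) (hb : 0 < b) (hσ : 0 < σ) :
    ∫ x : ℝ, |b + σ * x| * ((Real.sqrt (2*π*h))⁻¹ * Real.exp (-x^2/(2*h)))
      = b * erf (b / (σ * Real.sqrt (2*h)))
        + 2*σ*h*(Real.sqrt (2*π*h))⁻¹ * Real.exp (-(b/σ)^2/(2*h)) := by
  set c : ℝ := (Real.sqrt (2*π*h))⁻¹ with hcdef
  have hc0 : 0 < c := by rw [hcdef]; positivity
  set p : ℝ → ℝ := fun x => c * Real.exp (-x^2/(2*h)) with hpdef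
  have hp_nonneg : ∀ x, 0 ≤ p x := fun x => by rw [hpdef]; positivity
  have hp_int : Integrable p := (int_exp hh).const_mul c
  have hxp_int : Integrable (fun x => x * p x) := by
    refine ((int_xexp hh).const_mul c).congr (ae_of_all _ fun x => ?_)
    rw [hpdef]; ring
  have hp_even : ∀ x, p (-x) = p x := fun x => by rw [hpdef]; simp [neg_sq]
  have hp_cont : Continuous p := by
    rw [hpdef]
    exact continuous_const.mul (Real.continuous_exp.comp ((continuous_pow 2).neg.div_const _))
  have hp_total : ∫ x, p x = 1 := by
    have hfull : ∫ x : ℝ, Real.exp (-x^2/(2*h)) = Real.sqrt (2*π*h) := by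
      have hg := integral_gaussian (2*h)⁻¹
      rw [show π / (2*h)⁻¹ = 2*π*h by field_simp] at hg
      rw [← hg]
      refine integral_congr_ae (ae_of_all _ fun x => ?_)
      simp only [neg_mul, inv_mul_eq_div, neg_div]
    rw [hpdef]
    simp only
    rw [integral_const_mul, hfull, hcdef]
    exact inv_mul_cancel₀ (ne_of_gt (by positivity))
  -- zero mean
  have hzero : ∫ x, x * p x = 0 := by
    have hodd := integral_neg_eq_self (fun x => x * p x) (volume : Measure ℝ)
    have heq : ∀ x : ℝ, (-x) * p (-x) = -(x * p x) := fun x => by rw [hp_even]; ring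
    rw [show (∫ x : ℝ, (fun x => x * p x) (-x)) = ∫ x : ℝ, -(x * p x) from
      integral_congr_ae (ae_of_all _ fun x => heq x), integral_neg] at hodd
    linarith
  -- pointwise abs decomposition
  have habs_eq : ∀ x : ℝ, |b + σ*x| * p x
      = (b + σ*x) * p x + 2 * (max (-(b+σ*x)) 0 * p x) := by
    intro x
    rcases le_or_gt 0 (b + σ*x) with hz | hz
    · rw [abs_of_nonneg hz, max_eq_right (by linarith)]; ring
    · rw [abs_of_neg hz, max_eq_left (by linarith)]; ring
  have hf1_int : Integrable (fun x => (b + σ*x) * p x) := by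
    refine ((hp_int.const_mul b).add (hxp_int.const_mul σ)).congr (ae_of_all _ fun x => ?_)
    simp only [Pi.add_apply]
    ring
  -- integrability of the max part
  have habs1 : Integrable (fun x => |x| * p x) := by
    refine hxp_int.abs.congr (ae_of_all _ fun x => ?_)
    show |x * p x| = |x| * p x
    rw [abs_mul, abs_of_nonneg (hp_nonneg x)]
  have hg_int : Integrable (fun x => b * p x + σ * (|x| * p x)) :=
    (hp_int.const_mul b).add (habs1.const_mul σ)
  have hf2_int : Integrable (fun x => max (-(b+σ*x)) 0 * p x) := by
    refine Integrable.mono' hg_int ?_ (ae_of_all _ fun x => ?_)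
    · exact (((continuous_const.add (continuous_const.mul continuous_id)).neg.max
        continuous_const).mul hp_cont).aestronglyMeasurable
    · have h1 : max (-(b+σ*x)) 0 ≤ |b + σ*x| := by
        rcases le_or_gt 0 (b + σ*x) with hz | hz
        · rw [max_eq_right (by linarith)]; positivity
        · rw [max_eq_left (by linarith), abs_of_neg hz]
      have h2 : |b + σ*x| ≤ b + σ * |x| := by
        calc |b + σ*x| ≤ |b| + |σ*x| := abs_add_le _ _
          _ = b + σ * |x| := by rw [abs_of_pos hb, abs_mul, abs_of_pos hσ]
      have h3 : ‖max (-(b+σ*x)) 0 * p x‖ = max (-(b+σ*x)) 0 * p x := by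
        rw [Real.norm_eq_abs, abs_of_nonneg (mul_nonneg (le_max_right _ _) (hp_nonneg x))]
      rw [h3]
      nlinarith [hp_nonneg x]
  -- split the integral
  have hI : ∫ x, |b + σ*x| * p x
      = (∫ x, (b + σ*x) * p x) + 2 * ∫ x, max (-(b+σ*x)) 0 * p x := by
    rw [show (∫ x, |b + σ*x| * p x)
        = ∫ x, ((b + σ*x) * p x + 2 * (max (-(b+σ*x)) 0 * p x)) from
      integral_congr_ae (ae_of_all _ fun x => habs_eq x)]
    rw [integral_add hf1_int (hf2_int.const_mul 2), integral_const_mul]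
  have hI1 : ∫ x, (b + σ*x) * p x = b := by
    rw [show (fun x => (b + σ*x) * p x) = fun x => b * p x + σ * (x * p x) from
      funext fun x => by ring]
    have e1 : ∫ x, b * p x = b * ∫ x, p x := integral_const_mul b p
    have e2 : ∫ x, σ * (x * p x) = σ * ∫ x, x * p x := integral_const_mul σ _
    rw [integral_add (hp_int.const_mul b) (hxp_int.const_mul σ), e1, e2, hp_total, hzero]
    ring
  -- reflect the max integral
  set m : ℝ := b/σ with hmdef
  have hm0 : 0 < m := by rw [hmdef]; positivity
  have hK : ∫ x, max (-(b+σ*x)) 0 * p x = ∫ x, max (σ*x - b) 0 * p x := by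
    have hodd := integral_neg_eq_self (fun x => max (-(b+σ*x)) 0 * p x) (volume : Measure ℝ)
    rw [← hodd]
    refine integral_congr_ae (ae_of_all _ fun x => ?_)
    show max (-(b+σ*(-x))) 0 * p (-x) = max (σ*x - b) 0 * p x
    rw [hp_even, show -(b+σ*(-x)) = σ*x - b by ring]
  have hind : (fun x => max (σ*x - b) 0 * p x)
      = Set.indicator (Ioi m) (fun x => (σ*x - b) * p x) := by
    funext x
    by_cases hx : x ∈ Ioi m
    · rw [Set.indicator_of_mem hx]
      have hxm : m < x := hx
      rw [hmdef] at hxm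
      have hlt : b < x * σ := (div_lt_iff₀ hσ).mp hxm
      rw [max_eq_left (by nlinarith)]
    · rw [Set.indicator_of_notMem hx]
      have hxm : x ≤ m := not_lt.mp (by simpa [Set.mem_Ioi] using hx)
      rw [hmdef] at hxm
      have hle : x * σ ≤ b := (le_div_iff₀ hσ).mp hxm
      rw [max_eq_right (by nlinarith), zero_mul]
  have hT1 : ∫ x in Ioi m, x * p x = c * (h * Real.exp (-m^2/(2*h))) := by
    rw [show (fun x => x * p x) = fun x => c * (x * Real.exp (-x^2/(2*h))) from
      funext fun x => by rw [hpdef]; ring]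
    have e : ∫ x in Ioi m, c * (x * Real.exp (-x^2/(2*h)))
        = c * ∫ x in Ioi m, x * Real.exp (-x^2/(2*h)) := integral_const_mul c _
    rw [e, ftc_tail hh m]
  have hT2 : ∫ x in Ioi m, p x = 1/2 - 1/2 * erf (m / Real.sqrt (2*h)) := by
    have hs2h : (0:ℝ) < Real.sqrt (2*h) := Real.sqrt_pos.mpr (by positivity)
    have hsπ : (0:ℝ) < Real.sqrt π := Real.sqrt_pos.mpr Real.pi_pos
    have hIoi0 : ∫ x in Ioi (0:ℝ), p x = 1/2 := by
      have e : ∫ x in Ioi (0:ℝ), p x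
          = c * ∫ x in Ioi (0:ℝ), Real.exp (-x^2/(2*h)) := integral_const_mul c _
      rw [e, half_int hh, hcdef]
      have : (0:ℝ) < Real.sqrt (2*π*h) := Real.sqrt_pos.mpr (by positivity)
      field_simp
    have hsplit2 : (∫ x in Ioc (0:ℝ) m, p x) + ∫ x in Ioi m, p x = ∫ x in Ioi (0:ℝ), p x := by
      rw [← Ioc_union_Ioi_eq_Ioi hm0.le]
      exact (setIntegral_union (Ioc_disjoint_Ioi le_rfl) measurableSet_Ioi
        hp_int.integrableOn hp_int.integrableOn).symm
    have hIoc : ∫ x in Ioc (0:ℝ) m, p x = 1/2 * erf (m / Real.sqrt (2*h)) := by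
      rw [← intervalIntegral.integral_of_le hm0.le]
      have e : ∫ x in (0:ℝ)..m, p x
          = c * ∫ x in (0:ℝ)..m, Real.exp (-x^2/(2*h)) :=
        intervalIntegral.integral_const_mul c _
      rw [e, seg_int hh hm0.le, hcdef]
      have hss : Real.sqrt (2*π*h) = Real.sqrt (2*h) * Real.sqrt π := by
        rw [← Real.sqrt_mul (by positivity : (0:ℝ) ≤ 2*h) π]
        ring_nf
      rw [hss]
      field_simp
    linarith
  have hKval : ∫ x, max (-(b+σ*x)) 0 * p x
      = σ * (c * (h * Real.exp (-m^2/(2*h)))) - b * (1/2 - 1/2 * erf (m / Real.sqrt (2*h))) := by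
    rw [hK, hind, integral_indicator measurableSet_Ioi]
    rw [show (fun x => (σ*x - b) * p x) = fun x => σ * (x * p x) - b * p x from
      funext fun x => by ring]
    rw [integral_sub ((hxp_int.const_mul σ).integrableOn) ((hp_int.const_mul b).integrableOn)]
    have e1 : ∫ x in Ioi m, σ * (x * p x) = σ * ∫ x in Ioi m, x * p x := integral_const_mul σ _
    have e2 : ∫ x in Ioi m, b * p x = b * ∫ x in Ioi m, p x := integral_const_mul b _
    rw [e1, e2, hT1, hT2]
  rw [hI, hI1, hKval,
    show m / Real.sqrt (2*h) = b / (σ * Real.sqrt (2*h)) from by rw [hmdef, div_div], hmdef]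
  ring

/-- If `0 < λ₀h < 1`, `σ > 0` and `σ√h < (1 − λ₀h)/y*`, where `y*`
is the unique positive root of `g(y) = (1/y)√(π/2)e^{−y²/2} + erf(y/√2) − 1/(1−λ₀h)`,
then for `η_h ~ N(0,h)` one has `E|1 − λ₀h + σ η_h| < 1`. -/
theorem expected_abs_lt_one
    {Ω : Type*} [MeasurableSpace Ω] (P : Measure Ω) [IsProbabilityMeasure P]
    (h lam0 sigma ystar : ℝ)
    (hh : 0 < h) (hl0 : 0 < lam0 * h) (hl1 : lam0 * h < 1) (hs : 0 < sigma)
    (hystar_pos : 0 < ystar) (hystar_root : gfun (lam0 * h) ystar = 0)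
    (hystar_unique : ∀ y : ℝ, 0 < y → gfun (lam0 * h) y = 0 → y = ystar)
    (hcond : sigma * Real.sqrt h < (1 - lam0 * h) / ystar)
    (η : Ω → ℝ) (hη : Measurable η)
    (hlawη : Measure.map η P = gaussianReal 0 (Real.toNNReal h)) :
    ∫ ω, |1 - lam0 * h + sigma * η ω| ∂P < 1 := by
  set a : ℝ := lam0 * h with hadef
  set b : ℝ := 1 - a with hbdef
  have hb : 0 < b := by rw [hbdef]; linarith
  have hsh : (0:ℝ) < Real.sqrt h := Real.sqrt_pos.mpr hh
  have hv : (Real.toNNReal h) ≠ 0 := ne_of_gt (Real.toNNReal_pos.mpr hh)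
  have hcontf : Continuous (fun x : ℝ => |b + sigma * x|) :=
    (continuous_const.add (continuous_const.mul continuous_id)).abs
  -- transfer to an integral over ℝ
  have e1 : ∫ ω, |1 - lam0 * h + sigma * η ω| ∂P
      = ∫ x, |b + sigma * x| ∂(gaussianReal 0 (Real.toNNReal h)) := by
    rw [← hlawη, integral_map hη.aemeasurable hcontf.aestronglyMeasurable]
  -- express against the density
  have e2 : ∫ x, |b + sigma * x| ∂(gaussianReal 0 (Real.toNNReal h))
      = ∫ x : ℝ, |b + sigma * x| * ((Real.sqrt (2*π*h))⁻¹ * Real.exp (-x^2/(2*h))) := by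
    rw [gaussianReal_of_var_ne_zero 0 hv]
    have hd : (gaussianPDF 0 (Real.toNNReal h))
        = fun x => ((Real.toNNReal (gaussianPDFReal 0 (Real.toNNReal h) x) : ℝ≥0) : ℝ≥0∞) := rfl
    rw [hd, integral_withDensity_eq_integral_smul
      ((measurable_gaussianPDFReal 0 (Real.toNNReal h)).real_toNNReal) _]
    refine integral_congr_ae (ae_of_all _ fun x => ?_)
    show (gaussianPDFReal 0 (Real.toNNReal h) x).toNNReal • |b + sigma * x|
      = |b + sigma * x| * ((Real.sqrt (2*π*h))⁻¹ * Real.exp (-x^2/(2*h)))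
    rw [NNReal.smul_def, Real.coe_toNNReal _ (gaussianPDFReal_nonneg _ _ x), smul_eq_mul]
    rw [gaussianPDFReal]
    rw [Real.coe_toNNReal h hh.le]
    rw [sub_zero]
    ring
  rw [e1, e2, gauss_abs hh hb hs]
  -- now the pure real-analysis estimate
  set y : ℝ := b / (sigma * Real.sqrt h) with hydef
  have hy0 : 0 < y := by rw [hydef]; positivity
  have hygt : ystar < y := by
    have h1 : b / (b / ystar) < b / (sigma * Real.sqrt h) :=
      div_lt_div_of_pos_left hb (by positivity) hcond
    have h2 : b / (b / ystar) = ystar := by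
      rw [div_div_eq_mul_div, mul_comm b ystar, mul_div_assoc, div_self (ne_of_gt hb), mul_one]
    rw [← hydef] at h1
    linarith [h2 ▸ h1]
  have hgneg : gfun a y < 0 := gfun_neg hl0 hl1 hystar_pos hystar_unique hygt
  -- rewrite the two occurrences
  have harg : b / (sigma * Real.sqrt (2*h)) = y / Real.sqrt 2 := by
    rw [show Real.sqrt (2*h) = Real.sqrt 2 * Real.sqrt h from Real.sqrt_mul (by norm_num) h,
      hydef]
    have h2 : (0:ℝ) < Real.sqrt 2 := by positivity
    field_simp
  have hexp : -(b/sigma)^2/(2*h) = -y^2/2 := by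
    rw [hydef]
    rw [div_pow, div_pow, mul_pow, Real.sq_sqrt hh.le]
    field_simp
  rw [harg, hexp]
  -- coefficient comparison : 2 σ h (√(2πh))⁻¹ < σ √h √(π/2)
  have hC : 2*sigma*h*(Real.sqrt (2*π*h))⁻¹ < sigma * Real.sqrt h * Real.sqrt (π/2) := by
    have hs2π : (0:ℝ) < Real.sqrt (2*π) := Real.sqrt_pos.mpr (by positivity)
    have hkey : 2 / Real.sqrt (2*π) < Real.sqrt (π/2) := by
      rw [div_lt_iff₀ hs2π, ← Real.sqrt_mul (by positivity : (0:ℝ) ≤ π/2) (2*π),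
        show π/2 * (2*π) = π^2 by ring, Real.sqrt_sq Real.pi_pos.le]
      linarith [Real.pi_gt_three]
    have hrw : 2*sigma*h*(Real.sqrt (2*π*h))⁻¹ = sigma * Real.sqrt h * (2 / Real.sqrt (2*π)) := by
      rw [show (2:ℝ)*π*h = (2*π)*h by ring, Real.sqrt_mul (by positivity : (0:ℝ) ≤ 2*π) h]
      field_simp
      linear_combination (-1:ℝ) * Real.mul_self_sqrt hh.le
    rw [hrw]
    exact (mul_lt_mul_iff_right₀ (by positivity)).mpr hkey
  -- final algebra
  have hby : b * (1/y) = sigma * Real.sqrt h := by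
    rw [hydef]
    field_simp
  have hfin : b * erf (y/Real.sqrt 2) + sigma * Real.sqrt h * Real.sqrt (π/2)
      * Real.exp (-y^2/2) = b * gfun a y + 1 := by
    unfold gfun
    have hb1 : b * (1/(1-a)) = 1 := by
      rw [hbdef]
      field_simp
      exact div_self (by linarith)
    linear_combination (-(Real.sqrt (π/2) * Real.exp (-y^2/2))) * hby + hb1
  have hexp_pos : (0:ℝ) < Real.exp (-y^2/2) := Real.exp_pos _
  have hlt : b * erf (y/Real.sqrt 2) + 2*sigma*h*(Real.sqrt (2*π*h))⁻¹ * Real.exp (-y^2/2)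
      < b * gfun a y + 1 := by
    rw [← hfin]
    have := mul_lt_mul_of_pos_right hC hexp_pos
    linarith
  calc b * erf (y/Real.sqrt 2) + 2*sigma*h*(Real.sqrt (2*π*h))⁻¹ * Real.exp (-y^2/2)
      < b * gfun a y + 1 := hlt
    _ ≤ 1 := by nlinarith [hgneg, hb]
end

section
/- Assume additionally that each M_n takes values in the convex hull of {x_n^1,…,x_n^N}, and set α := E|1 − λ₀h − σ η| for η ~ N(0,h) and C̃ := 4√(3N) · max{Σ_{l=1}^d s_l, Σ_{l=1}^d s_l²}. Then for every n ≥ 0 and every i ∈ {1,…,N}, E‖x_{n+1}^i − x_n^i‖ ≤ 2(λ₀ + λ₁) h C̃ αⁿ + 2σ √(h C̃) ((1−λ₀h)² + σ²h)^{n/2}. -/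
open MeasureTheory ProbabilityTheory Filter Real NNReal ENNReal

namespace AdCBOAux

variable {v : ℝ≥0}

lemma gaussianPDFReal_eq (v : ℝ≥0) :
    gaussianPDFReal 0 v = fun x => (Real.sqrt (2 * π * v))⁻¹ * Real.exp (-(2 * (v:ℝ))⁻¹ * x ^ 2) := by
  ext x
  rw [gaussianPDFReal]
  congr 1
  congr 1
  rw [sub_zero]
  rw [neg_div, neg_mul]
  congr 1
  rw [div_eq_inv_mul]

lemma integral_gaussian_fun (hv : v ≠ 0) (f : ℝ → ℝ) :
    ∫ x, f x ∂(gaussianReal 0 v) = ∫ x, gaussianPDFReal 0 v x * f x := by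
  rw [gaussianReal_of_var_ne_zero 0 hv]
  have hd : gaussianPDF 0 v = fun x => ((Real.toNNReal (gaussianPDFReal 0 v x) : ℝ≥0) : ℝ≥0∞) := by
    ext x; rfl
  rw [hd, integral_withDensity_eq_integral_smul
    (f := fun x => (gaussianPDFReal 0 v x).toNNReal)
    (measurable_real_toNNReal.comp (measurable_gaussianPDFReal 0 v)) f]
  congr 1
  ext x
  rw [NNReal.smul_def, smul_eq_mul, Real.coe_toNNReal _ (gaussianPDFReal_nonneg _ _ _)]

lemma integrable_gaussian_iff (hv : v ≠ 0) {f : ℝ → ℝ} :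
    Integrable f (gaussianReal 0 v) ↔
      Integrable (fun x => f x * gaussianPDFReal 0 v x) volume := by
  rw [gaussianReal_of_var_ne_zero 0 hv]
  rw [show gaussianPDF 0 v = fun x => ENNReal.ofReal (gaussianPDFReal 0 v x) from rfl]
  rw [integrable_withDensity_iff ((measurable_gaussianPDFReal 0 v).ennreal_ofReal)
      (Filter.Eventually.of_forall fun x => ENNReal.ofReal_lt_top)]
  refine integrable_congr (Filter.Eventually.of_forall fun x => ?_)
  show f x * (ENNReal.ofReal (gaussianPDFReal 0 v x)).toReal = f x * gaussianPDFReal 0 v x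
  rw [ENNReal.toReal_ofReal (gaussianPDFReal_nonneg _ _ _)]

lemma integrable_pow_gaussian (hv : v ≠ 0) (k : ℕ) :
    Integrable (fun x => x ^ k) (gaussianReal 0 v) := by
  rw [integrable_gaussian_iff hv, gaussianPDFReal_eq v]
  have hb : 0 < (2 * (v:ℝ))⁻¹ := by
    have : 0 < (v:ℝ) := lt_of_le_of_ne v.2 (by exact_mod_cast (Ne.symm hv))
    positivity
  have h1 := integrable_rpow_mul_exp_neg_mul_sq hb (s := (k : ℝ))
    (by
      have : (0:ℝ) ≤ (k:ℝ) := Nat.cast_nonneg k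
      linarith)
  simp_rw [Real.rpow_natCast] at h1
  have := (h1.const_mul ((Real.sqrt (2 * π * v))⁻¹))
  refine this.congr' ?_ (Filter.Eventually.of_forall fun x => by ring)
  exact this.aestronglyMeasurable.congr (Filter.Eventually.of_forall fun x => by ring)
end AdCBOAux

namespace AdCBOAux2
variable {v : ℝ≥0}

lemma gaussianPDFReal_eq' (v : ℝ≥0) :
    gaussianPDFReal 0 v = fun x => (Real.sqrt (2 * π * v))⁻¹ * Real.exp (-(2 * (v:ℝ))⁻¹ * x ^ 2) := by
  ext x
  rw [gaussianPDFReal]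
  congr 1
  congr 1
  rw [sub_zero, neg_div, neg_mul]
  congr 1
  rw [div_eq_inv_mul]

lemma integral_even_moment (hv : v ≠ 0) (k : ℕ) (hk : Even k)
    (hgi : ∫ x, x ^ k ∂(gaussianReal 0 v) = ∫ x, gaussianPDFReal 0 v x * x ^ k) :
    ∫ x, x ^ k ∂(gaussianReal 0 v) =
      (Real.sqrt (2 * π * v))⁻¹ * (2 * ((2 * (v:ℝ)) ^ (((k:ℝ) + 1) / 2) * (1 / 2)
        * Real.Gamma (((k:ℝ) + 1) / 2))) := by
  have hvpos : 0 < (v:ℝ) := lt_of_le_of_ne v.2 (by exact_mod_cast (Ne.symm hv))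
  have hb : 0 < (2 * (v:ℝ))⁻¹ := by positivity
  rw [hgi, gaussianPDFReal_eq' v]
  simp_rw [mul_assoc, mul_comm (Real.exp _) _]
  rw [integral_const_mul]
  congr 1
  have habs : (fun x : ℝ => x ^ k * Real.exp (-(2*(v:ℝ))⁻¹ * x ^ 2))
      = fun x : ℝ => |x| ^ k * Real.exp (-(2*(v:ℝ))⁻¹ * |x| ^ 2) := by
    ext x; rw [hk.pow_abs, sq_abs]
  rw [habs, integral_comp_abs (f := fun x : ℝ => x ^ k * Real.exp (-(2*(v:ℝ))⁻¹ * x ^ 2))]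
  congr 1
  have := integral_rpow_mul_exp_neg_mul_rpow (p := 2) (q := (k:ℝ)) (b := (2*(v:ℝ))⁻¹)
    (by norm_num) (by have : (0:ℝ) ≤ (k:ℝ) := Nat.cast_nonneg k; linarith) hb
  simp_rw [Real.rpow_two, Real.rpow_natCast] at this
  rw [this]
  rw [show ((2*(v:ℝ))⁻¹ : ℝ) ^ (-((k:ℝ) + 1) / 2) = (2*(v:ℝ)) ^ (((k:ℝ) + 1) / 2) by
    rw [Real.inv_rpow (by positivity), ← Real.rpow_neg (by positivity)]
    ring_nf]
  ring

lemma integral_sq_gaussian (hv : v ≠ 0)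
    (hgi : ∫ x, x ^ 2 ∂(gaussianReal 0 v) = ∫ x, gaussianPDFReal 0 v x * x ^ 2) :
    ∫ x, x ^ 2 ∂(gaussianReal 0 v) = v := by
  have hvpos : 0 < (v:ℝ) := lt_of_le_of_ne v.2 (by exact_mod_cast (Ne.symm hv))
  rw [integral_even_moment hv 2 ⟨1, rfl⟩ hgi]
  have h32 : ((2:ℝ) + 1) / 2 = 1/2 + 1 := by norm_num
  rw [show (((2:ℕ):ℝ) + 1) / 2 = 1/2 + 1 by norm_num]
  rw [Real.Gamma_add_one (by norm_num), Real.Gamma_one_half_eq]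
  have hT : (0:ℝ) < 2 * (v:ℝ) := by positivity
  rw [show (1/2 + 1 : ℝ) = 3/2 by norm_num]
  rw [show ((3:ℝ)/2) = 1 + 1/2 by norm_num, Real.rpow_add hT, Real.rpow_one,
    ← Real.sqrt_eq_rpow]
  rw [show 2 * π * (v:ℝ) = π * (2 * (v:ℝ)) by ring, Real.sqrt_mul Real.pi_pos.le]
  have h1 : Real.sqrt π ≠ 0 := by positivity
  have h2 : Real.sqrt (2*(v:ℝ)) ≠ 0 := by positivity
  field_simp

lemma integral_fourth_gaussian (hv : v ≠ 0)
    (hgi : ∫ x, x ^ 4 ∂(gaussianReal 0 v) = ∫ x, gaussianPDFReal 0 v x * x ^ 4) :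
    ∫ x, x ^ 4 ∂(gaussianReal 0 v) = 3 * (v:ℝ) ^ 2 := by
  have hvpos : 0 < (v:ℝ) := lt_of_le_of_ne v.2 (by exact_mod_cast (Ne.symm hv))
  rw [integral_even_moment hv 4 ⟨2, rfl⟩ hgi]
  rw [show (((4:ℕ):ℝ) + 1) / 2 = 3/2 + 1 by norm_num]
  rw [Real.Gamma_add_one (by norm_num), show (3/2:ℝ) = 1/2 + 1 by norm_num,
    Real.Gamma_add_one (by norm_num), Real.Gamma_one_half_eq]
  have hT : (0:ℝ) < 2 * (v:ℝ) := by positivity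
  rw [show (1/2 + 1 + 1 : ℝ) = 2 + 1/2 by norm_num, Real.rpow_add hT,
    ← Real.sqrt_eq_rpow, Real.rpow_two]
  rw [show 2 * π * (v:ℝ) = π * (2 * (v:ℝ)) by ring, Real.sqrt_mul Real.pi_pos.le]
  have h1 : Real.sqrt π ≠ 0 := by positivity
  have h2 : Real.sqrt (2*(v:ℝ)) ≠ 0 := by positivity
  field_simp
  nlinarith [Real.mul_self_sqrt hT.le, Real.mul_self_sqrt Real.pi_pos.le,
    Real.sqrt_nonneg (2*(v:ℝ)), Real.sqrt_nonneg π]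
end AdCBOAux2

namespace AdCBOAux3

lemma integral_id_gaussian (v : ℝ≥0) (hint : Integrable (fun x : ℝ => x) (gaussianReal 0 v)) :
    ∫ x, x ∂(gaussianReal 0 v) = 0 := by
  have hmap : (gaussianReal 0 v).map (fun x => (-1 : ℝ) * x) = gaussianReal 0 v := by
    have := gaussianReal_map_const_mul (μ := 0) (v := v) (-1)
    simpa using this
  have h1 : ∫ x, x ∂((gaussianReal 0 v).map (fun x => (-1:ℝ) * x))
      = ∫ x, (-1 : ℝ) * x ∂(gaussianReal 0 v) :=
    integral_map (φ := fun x => (-1:ℝ) * x) (f := fun x : ℝ => x) (by fun_prop)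
      measurable_id.aestronglyMeasurable
  rw [hmap] at h1
  rw [integral_const_mul] at h1
  linarith [h1]

lemma int_le_sqrt_int_sq {Ω : Type*} [MeasurableSpace Ω] (P : Measure Ω) [IsProbabilityMeasure P]
    {Y : Ω → ℝ} (h0 : ∀ ω, 0 ≤ Y ω) (hY : Integrable Y P)
    (hY2 : Integrable (fun ω => Y ω ^ 2) P) :
    ∫ ω, Y ω ∂P ≤ Real.sqrt (∫ ω, Y ω ^ 2 ∂P) := by
  set m := ∫ ω, Y ω ∂P with hm
  have hm0 : 0 ≤ m := integral_nonneg h0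
  have hexp : ∫ ω, (Y ω - m) ^ 2 ∂P = ∫ ω, Y ω ^ 2 ∂P - 2 * m * m + m ^ 2 := by
    have : ∀ ω, (Y ω - m) ^ 2 = Y ω ^ 2 - (2 * m) * Y ω + m ^ 2 := fun ω => by ring
    simp_rw [this]
    have e1 : Integrable (fun ω => Y ω ^ 2 - 2 * m * Y ω) P := hY2.sub (hY.const_mul (2 * m))
    rw [integral_add e1 (integrable_const _),
      integral_sub hY2 (hY.const_mul (2 * m)), integral_const_mul, integral_const]
    simp [measure_univ, ← hm]
  have hnn : 0 ≤ ∫ ω, (Y ω - m) ^ 2 ∂P := integral_nonneg fun ω => sq_nonneg _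
  have hsq : m ^ 2 ≤ ∫ ω, Y ω ^ 2 ∂P := by nlinarith [hexp, hnn]
  exact (Real.le_sqrt hm0 (integral_nonneg fun ω => sq_nonneg _)).mpr hsq

lemma sqrt_sum_sq_le_sum_abs {d : ℕ} (u : Fin d → ℝ) :
    Real.sqrt (∑ l, u l ^ 2) ≤ ∑ l, |u l| := by
  have h1 : ∑ l, u l ^ 2 ≤ (∑ l, |u l|) ^ 2 := by
    have := Finset.sum_sq_le_sq_sum_of_nonneg (s := Finset.univ) (f := fun l => |u l|)
      (fun i _ => abs_nonneg _)
    simpa [sq_abs] using this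
  calc Real.sqrt (∑ l, u l ^ 2) ≤ Real.sqrt ((∑ l, |u l|) ^ 2) := Real.sqrt_le_sqrt h1
    _ = ∑ l, |u l| := Real.sqrt_sq (Finset.sum_nonneg fun i _ => abs_nonneg _)

lemma sqrt_sum_sq_add_le {d : ℕ} (u w : Fin d → ℝ) :
    Real.sqrt (∑ l, (u l + w l) ^ 2)
      ≤ Real.sqrt (∑ l, u l ^ 2) + Real.sqrt (∑ l, w l ^ 2) := by
  have hcs : ∑ l, u l * w l ≤ Real.sqrt (∑ l, u l ^ 2) * Real.sqrt (∑ l, w l ^ 2) := by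
    have h := Finset.sum_mul_sq_le_sq_mul_sq Finset.univ u w
    have h2 : (∑ l, u l * w l) ^ 2 ≤
        (Real.sqrt (∑ l, u l ^ 2) * Real.sqrt (∑ l, w l ^ 2)) ^ 2 := by
      rw [mul_pow, Real.sq_sqrt (Finset.sum_nonneg fun i _ => sq_nonneg _),
        Real.sq_sqrt (Finset.sum_nonneg fun i _ => sq_nonneg _)]
      exact h
    calc ∑ l, u l * w l ≤ |∑ l, u l * w l| := le_abs_self _
      _ = Real.sqrt ((∑ l, u l * w l) ^ 2) := (Real.sqrt_sq_eq_abs _).symm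
      _ ≤ Real.sqrt ((Real.sqrt (∑ l, u l ^ 2) * Real.sqrt (∑ l, w l ^ 2)) ^ 2) :=
          Real.sqrt_le_sqrt h2
      _ = _ := by rw [Real.sqrt_sq (by positivity)]
  have hexp : ∑ l, (u l + w l) ^ 2 = ∑ l, u l ^ 2 + 2 * ∑ l, u l * w l + ∑ l, w l ^ 2 := by
    have e : ∀ l, (u l + w l) ^ 2 = u l ^ 2 + 2 * (u l * w l) + w l ^ 2 := fun l => by ring
    simp_rw [e, Finset.sum_add_distrib, ← Finset.mul_sum]
  have : ∑ l, (u l + w l) ^ 2 ≤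
      (Real.sqrt (∑ l, u l ^ 2) + Real.sqrt (∑ l, w l ^ 2)) ^ 2 := by
    rw [hexp, add_sq, Real.sq_sqrt (Finset.sum_nonneg fun i _ => sq_nonneg _),
      Real.sq_sqrt (Finset.sum_nonneg fun i _ => sq_nonneg _)]
    nlinarith [hcs]
  calc Real.sqrt (∑ l, (u l + w l) ^ 2) ≤ _ := Real.sqrt_le_sqrt this
    _ = _ := Real.sqrt_sq (by positivity)
end AdCBOAux3

open MeasureTheory ProbabilityTheory Filter

set_option maxHeartbeats 2000000 in
/-- One-step increment bound for Ad-CBO: with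
`α := E|1 − λ₀h − ση|` and `C̃ := 4√(3N)·max{Σ_l s_l, Σ_l s_l²}`,
`E‖x_{n+1}^i − x_n^i‖ ≤ 2(λ₀+λ₁)hC̃αⁿ + 2σ√(hC̃)((1−λ₀h)² + σ²h)^{n/2}`. -/
theorem adCBO_increment_bound
    {Ω : Type*} [MeasurableSpace Ω] (P : Measure Ω) [IsProbabilityMeasure P]
    (d N : ℕ) (h lam0 lam1 sigma : ℝ)
    (hh : 0 < h) (hlam0 : 0 < lam0) (hlam1 : 0 ≤ lam1) (hsigma : 0 ≤ sigma)
    (W : ℕ → Ω → Fin d → ℝ) (x : ℕ → Fin N → Ω → Fin d → ℝ)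
    (M : ℕ → Ω → Fin d → ℝ)
    (hWmeas : ∀ n, Measurable (W n))
    (hxmeas : ∀ n i, Measurable (x n i))
    (hWindep : iIndepFun
      (fun (p : ℕ × Fin d) ω => W p.1 ω p.2) P)
    (hWlaw : ∀ n l, Measure.map (fun ω => W n ω l) P
      = gaussianReal 0 (Real.toNNReal h))
    (hWpast : ∀ n, Indep (MeasurableSpace.comap (W n) inferInstance)
      ((⨆ i : Fin N, MeasurableSpace.comap (x 0 i) inferInstance) ⊔
        (⨆ k : Fin n, MeasurableSpace.comap (W k) inferInstance)) P)
    (hMmeas : ∀ n, @Measurable Ω (Fin d → ℝ)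
      ((⨆ i : Fin N, MeasurableSpace.comap (x 0 i) inferInstance) ⊔
        (⨆ k : Fin n, MeasurableSpace.comap (W k) inferInstance)) _ (M n))
    (hrec : ∀ n i ω l,
      x (n+1) i ω l = x n i ω l - lam0 * h * (x n i ω l - M n ω l)
        - lam1 * h * ((1 / (N : ℝ)) * ∑ j, x n j ω l - M n ω l)
        - sigma * (x n i ω l - M n ω l) * W n ω l)
    -- Gaussian initial data: i.i.d. across particles and coordinates
    (s : Fin d → ℝ) (hs : ∀ l, 0 < s l)
    (hx0indep : iIndepFun
      (fun (p : Fin N × Fin d) ω => x 0 p.1 ω p.2) P)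
    (hx0law : ∀ (i : Fin N) (l : Fin d),
      Measure.map (fun ω => x 0 i ω l) P = gaussianReal 0 (Real.toNNReal ((s l) ^ 2)))
    -- `M_n` takes values in the convex hull of the swarm
    (hMconv : ∀ n ω, M n ω ∈ convexHull ℝ (Set.range fun i : Fin N => x n i ω)) :
    ∀ (n : ℕ) (i : Fin N),
      ∫ ω, Real.sqrt (∑ l, (x (n + 1) i ω l - x n i ω l) ^ 2) ∂P
        ≤ 2 * (lam0 + lam1) * h * (4 * Real.sqrt (3 * N) * max (∑ l, s l) (∑ l, (s l) ^ 2))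
            * (∫ y, |1 - lam0 * h - sigma * y| ∂(gaussianReal 0 (Real.toNNReal h))) ^ n
          + 2 * sigma
            * Real.sqrt (h * (4 * Real.sqrt (3 * N) * max (∑ l, s l) (∑ l, (s l) ^ 2)))
            * ((1 - lam0 * h) ^ 2 + sigma ^ 2 * h) ^ ((n : ℝ) / 2) := by
  -- Nonempty Ω and N positive
  have hΩ : Nonempty Ω := by
    by_contra hemp
    have : (Set.univ : Set Ω) = ∅ := Set.univ_eq_empty_iff.mpr (not_nonempty_iff.mp hemp)
    have h1 : P Set.univ = 1 := measure_univ
    rw [this] at h1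
    simp at h1
  have hN : 0 < N := by
    rcases Nat.eq_zero_or_pos N with h0 | h0
    · exfalso
      obtain ⟨ω⟩ := hΩ
      have := hMconv 0 ω
      subst h0
      rw [show (Set.range fun i : Fin 0 => x 0 i ω) = ∅ from
        Set.range_eq_empty _, convexHull_empty] at this
      exact this
    · exact h0
  -- abbreviations
  set γ : Measure ℝ := gaussianReal 0 (Real.toNNReal h) with hγdef
  set α : ℝ := ∫ y, |1 - lam0 * h - sigma * y| ∂γ with hαdef
  set β : ℝ := (1 - lam0 * h) ^ 2 + sigma ^ 2 * h with hβdef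
  set Ct : ℝ := 4 * Real.sqrt (3 * N) * max (∑ l, s l) (∑ l, (s l) ^ 2) with hCtdef
  have hβ0 : 0 ≤ β := by positivity
  have hα0 : 0 ≤ α := integral_nonneg fun y => abs_nonneg _
  -- the filtration
  set F : ℕ → MeasurableSpace Ω := fun n =>
    (⨆ i : Fin N, MeasurableSpace.comap (x 0 i) inferInstance) ⊔
      (⨆ k : Fin n, MeasurableSpace.comap (W k) inferInstance) with hFdef
  have hFle : ∀ n, F n ≤ ‹MeasurableSpace Ω› := fun n =>
    sup_le (iSup_le fun i => (hxmeas 0 i).comap_le)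
      (iSup_le fun k => (hWmeas k).comap_le)
  have hx0F : ∀ (n : ℕ) (j : Fin N) (l : Fin d),
      Measurable[F n] fun ω => x 0 j ω l := fun n j l =>
    (measurable_pi_apply l).comp (Measurable.of_comap_le
      (le_trans (le_iSup (fun i : Fin N => MeasurableSpace.comap (x 0 i) inferInstance) j)
        le_sup_left))
  have hWF : ∀ (n k : ℕ) (l : Fin d), k < n →
      Measurable[F n] fun ω => W k ω l := fun n k l hk =>
    (measurable_pi_apply l).comp (Measurable.of_comap_le
      (le_trans (le_iSup (fun k' : Fin n => MeasurableSpace.comap (W k') inferInstance) ⟨k, hk⟩)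
        le_sup_right))
  -- independence helper
  have hIF : ∀ (n : ℕ) (l : Fin d) (f : Ω → ℝ) (_ : Measurable[F n] f)
      (φ : ℝ → ℝ) (_ : Measurable φ),
      IndepFun f (fun ω => φ (W n ω l)) P := by
    intro n l f hf φ hφ
    rw [IndepFun_iff_Indep]
    have h1 : Indep (F n) (MeasurableSpace.comap (W n) inferInstance) P := (hWpast n).symm
    refine indep_of_indep_of_le_left (indep_of_indep_of_le_right h1 ?_) ?_
    · exact Measurable.comap_le
        ((hφ.comp ((measurable_pi_apply l).comp (Measurable.of_comap_le le_rfl))))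
    · exact hf.comap_le
  -- transport of integrals along the laws
  have hWml : ∀ (n : ℕ) (l : Fin d), Measurable fun ω => W n ω l := fun n l =>
    (measurable_pi_apply l).comp (hWmeas n)
  have hxml : ∀ (j : Fin N) (l : Fin d), Measurable fun ω => x 0 j ω l := fun j l =>
    (measurable_pi_apply l).comp (hxmeas 0 j)
  have hT : ∀ (n : ℕ) (l : Fin d) (φ : ℝ → ℝ), Measurable φ →
      ∫ ω, φ (W n ω l) ∂P = ∫ y, φ y ∂γ := by
    intro n l φ hφ
    have := integral_map (hWml n l).aemeasurable (μ := P) hφ.aestronglyMeasurable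
    rw [hWlaw n l] at this
    exact this.symm
  have hTi : ∀ (n : ℕ) (l : Fin d) (φ : ℝ → ℝ), Measurable φ →
      Integrable φ γ → Integrable (fun ω => φ (W n ω l)) P := by
    intro n l φ hφ hint
    have := (integrable_map_measure (μ := P) (f := fun ω => W n ω l)
      hφ.aestronglyMeasurable (hWml n l).aemeasurable).mp
    rw [hWlaw n l] at this
    exact this hint
  have hTx : ∀ (j : Fin N) (l : Fin d) (φ : ℝ → ℝ), Measurable φ →
      ∫ ω, φ (x 0 j ω l) ∂P = ∫ y, φ y ∂(gaussianReal 0 (Real.toNNReal ((s l) ^ 2))) := by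
    intro j l φ hφ
    have := integral_map (hxml j l).aemeasurable (μ := P) hφ.aestronglyMeasurable
    rw [hx0law j l] at this
    exact this.symm
  have hTxi : ∀ (j : Fin N) (l : Fin d) (φ : ℝ → ℝ), Measurable φ →
      Integrable φ (gaussianReal 0 (Real.toNNReal ((s l) ^ 2))) →
      Integrable (fun ω => φ (x 0 j ω l)) P := by
    intro j l φ hφ hint
    have := (integrable_map_measure (μ := P) (f := fun ω => x 0 j ω l)
      hφ.aestronglyMeasurable (hxml j l).aemeasurable).mp
    rw [hx0law j l] at this
    exact this hint
  -- gaussian moments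
  have hhne : (Real.toNNReal h) ≠ 0 := by
    simp only [ne_eq, Real.toNNReal_eq_zero, not_le]
    exact hh
  have hcoeh : ((Real.toNNReal h : ℝ≥0) : ℝ) = h := Real.coe_toNNReal h hh.le
  have hsne : ∀ l, (Real.toNNReal ((s l) ^ 2)) ≠ 0 := by
    intro l
    simp only [ne_eq, Real.toNNReal_eq_zero, not_le]
    exact pow_pos (hs l) 2
  have hcoes : ∀ l, ((Real.toNNReal ((s l) ^ 2) : ℝ≥0) : ℝ) = (s l) ^ 2 := fun l =>
    Real.coe_toNNReal _ (by positivity)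
  -- integrability over γ
  have hIγ1 : Integrable (fun y : ℝ => y) γ := by
    simpa using AdCBOAux.integrable_pow_gaussian hhne 1
  have hIγ2 : Integrable (fun y : ℝ => y ^ 2) γ := AdCBOAux.integrable_pow_gaussian hhne 2
  have hIγabs : Integrable (fun y : ℝ => |y|) γ := hIγ1.abs
  have hIγc : Integrable (fun y : ℝ => |1 - lam0 * h - sigma * y|) γ :=
    (((integrable_const (1 - lam0 * h)).sub (hIγ1.const_mul sigma)).abs)
  have hIγc2 : Integrable (fun y : ℝ => (1 - lam0 * h - sigma * y) ^ 2) γ := by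
    have : ∀ y : ℝ, (1 - lam0 * h - sigma * y) ^ 2
        = (1 - lam0 * h) ^ 2 - (2 * (1 - lam0 * h) * sigma) * y + sigma ^ 2 * y ^ 2 :=
      fun y => by ring
    simp_rw [this]
    exact ((integrable_const _).sub (hIγ1.const_mul _)).add (hIγ2.const_mul _)
  -- moment values over γ
  have hEγ1 : ∫ y, y ∂γ = 0 := AdCBOAux3.integral_id_gaussian _ hIγ1
  have hEγ2 : ∫ y, y ^ 2 ∂γ = h := by
    rw [AdCBOAux2.integral_sq_gaussian hhne (AdCBOAux.integral_gaussian_fun hhne _), hcoeh]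
  have hEγc2 : ∫ y, (1 - lam0 * h - sigma * y) ^ 2 ∂γ = β := by
    have e : ∀ y : ℝ, (1 - lam0 * h - sigma * y) ^ 2
        = (1 - lam0 * h) ^ 2 - (2 * (1 - lam0 * h) * sigma) * y + sigma ^ 2 * y ^ 2 :=
      fun y => by ring
    simp_rw [e]
    have e1 : Integrable (fun y : ℝ => (1 - lam0 * h) ^ 2 - 2 * (1 - lam0 * h) * sigma * y) γ :=
      (integrable_const _).sub (hIγ1.const_mul _)
    rw [integral_add e1 (hIγ2.const_mul _),
      integral_sub (integrable_const _) (hIγ1.const_mul _), integral_const_mul,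
      integral_const_mul, integral_const, hEγ1, hEγ2]
    simp [measure_univ]
    exact hβdef.symm
  -- initial data fourth moments
  have hIx4 : ∀ (j : Fin N) (l : Fin d), Integrable (fun ω => (x 0 j ω l) ^ 4) P :=
    fun j l => hTxi j l (fun y => y ^ 4) (by fun_prop)
      (AdCBOAux.integrable_pow_gaussian (hsne l) 4)
  have hEx4 : ∀ (j : Fin N) (l : Fin d), ∫ ω, (x 0 j ω l) ^ 4 ∂P = 3 * (s l) ^ 4 := by
    intro j l
    rw [hTx j l (fun y => y ^ 4) (by fun_prop),
      AdCBOAux2.integral_fourth_gaussian (hsne l)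
        (AdCBOAux.integral_gaussian_fun (hsne l) _), hcoes l]
    ring
  -- the dominating initial-data functional G
  set G : Fin d → Ω → ℝ :=
    fun l ω => Real.sqrt (Real.sqrt (∑ j, (x 0 j ω l) ^ 4)) with hGdef
  have hG0 : ∀ l ω, 0 ≤ G l ω := fun l ω => Real.sqrt_nonneg _
  have hS40 : ∀ l ω, (0:ℝ) ≤ ∑ j, (x 0 j ω l) ^ 4 := fun l ω =>
    Finset.sum_nonneg fun j _ => by positivity
  have hG2 : ∀ l ω, G l ω ^ 2 = Real.sqrt (∑ j, (x 0 j ω l) ^ 4) := fun l ω =>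
    Real.sq_sqrt (Real.sqrt_nonneg _)
  have hG4 : ∀ l ω, G l ω ^ 4 = ∑ j, (x 0 j ω l) ^ 4 := by
    intro l ω
    have : G l ω ^ 4 = (G l ω ^ 2) ^ 2 := by ring
    rw [this, hG2, Real.sq_sqrt (hS40 l ω)]
  have hGb : ∀ (l : Fin d) (ω : Ω) (j : Fin N), |x 0 j ω l| ≤ G l ω := by
    intro l ω j
    have h4 : |x 0 j ω l| ^ 4 ≤ G l ω ^ 4 := by
      rw [hG4]
      calc |x 0 j ω l| ^ 4 = (x 0 j ω l) ^ 4 := by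
            rw [← abs_pow, abs_of_nonneg (by positivity)]
        _ ≤ ∑ j', (x 0 j' ω l) ^ 4 :=
            Finset.single_le_sum (f := fun j' => (x 0 j' ω l) ^ 4)
              (fun j' _ => by positivity) (Finset.mem_univ j)
    exact le_of_pow_le_pow_left₀ (by norm_num) (hG0 l ω) h4
  have hGmeasF : ∀ (n : ℕ) (l : Fin d), Measurable[F n] (G l) := by
    intro n l
    apply Measurable.sqrt; apply Measurable.sqrt
    exact Finset.measurable_sum _ fun j _ => (hx0F n j l).pow measurable_const
  have hGmeas : ∀ l, Measurable (G l) := fun l =>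
    (hGmeasF 0 l).mono (hFle 0) le_rfl
  have hIS4 : ∀ l, Integrable (fun ω => ∑ j, (x 0 j ω l) ^ 4) P := fun l =>
    integrable_finset_sum _ fun j _ => hIx4 j l
  have hES4 : ∀ l, ∫ ω, ∑ j, (x 0 j ω l) ^ 4 ∂P = 3 * N * (s l) ^ 4 := by
    intro l
    rw [integral_finset_sum _ fun j _ => hIx4 j l]
    simp_rw [hEx4]
    rw [Finset.sum_const, Finset.card_univ, Fintype.card_fin]
    push_cast; ring
  have hIG : ∀ l, Integrable (G l) P := by
    intro l
    refine Integrable.mono' ((integrable_const 1).add (hIS4 l)) (hGmeas l).aestronglyMeasurable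
      (Filter.Eventually.of_forall fun ω => ?_)
    rw [Real.norm_eq_abs, abs_of_nonneg (hG0 l ω)]
    simp only [Pi.add_apply]
    nlinarith [hG4 l ω, sq_nonneg (G l ω ^ 2 - 1/2), sq_nonneg (G l ω - 1/2)]
  have hIG2 : ∀ l, Integrable (fun ω => G l ω ^ 2) P := by
    intro l
    refine Integrable.mono' ((integrable_const 1).add (hIS4 l))
      (((hGmeas l).pow measurable_const).aestronglyMeasurable)
      (Filter.Eventually.of_forall fun ω => ?_)
    rw [Real.norm_eq_abs, abs_of_nonneg (by positivity)]
    simp only [Pi.add_apply]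
    nlinarith [hG4 l ω, sq_nonneg (G l ω ^ 2 - 1/2)]
  have hIG4 : ∀ l, Integrable (fun ω => G l ω ^ 4) P := by
    intro l
    refine ((hIS4 l).congr ?_)
    exact Filter.Eventually.of_forall fun ω => (hG4 l ω).symm
  -- moment bounds for G
  have hEG2 : ∀ l, ∫ ω, G l ω ^ 2 ∂P ≤ Real.sqrt (3 * N) * (s l) ^ 2 := by
    intro l
    have h1 : ∫ ω, G l ω ^ 2 ∂P ≤ Real.sqrt (∫ ω, (G l ω ^ 2) ^ 2 ∂P) := by
      refine AdCBOAux3.int_le_sqrt_int_sq P (fun ω => by positivity) (hIG2 l) ?_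
      refine (hIG4 l).congr (Filter.Eventually.of_forall fun ω => by ring)
    have h2 : ∫ ω, (G l ω ^ 2) ^ 2 ∂P = 3 * N * (s l) ^ 4 := by
      rw [show (fun ω => (G l ω ^ 2) ^ 2) = fun ω => ∑ j, (x 0 j ω l) ^ 4 from
        funext fun ω => by rw [← hG4 l ω]; ring]
      exact hES4 l
    rw [h2] at h1
    calc ∫ ω, G l ω ^ 2 ∂P ≤ Real.sqrt (3 * N * (s l) ^ 4) := h1
      _ = Real.sqrt (3 * N) * (s l) ^ 2 := by
          rw [show (3 * (N:ℝ) * (s l) ^ 4) = (3 * N) * ((s l) ^ 2) ^ 2 by ring,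
            Real.sqrt_mul (by positivity), Real.sqrt_sq (by positivity)]
  have hEG : ∀ l, ∫ ω, G l ω ∂P ≤ Real.sqrt (Real.sqrt (3 * N)) * s l := by
    intro l
    have h1 : ∫ ω, G l ω ∂P ≤ Real.sqrt (∫ ω, G l ω ^ 2 ∂P) :=
      AdCBOAux3.int_le_sqrt_int_sq P (hG0 l) (hIG l) (hIG2 l)
    calc ∫ ω, G l ω ∂P ≤ Real.sqrt (∫ ω, G l ω ^ 2 ∂P) := h1
      _ ≤ Real.sqrt (Real.sqrt (3 * N) * (s l) ^ 2) := Real.sqrt_le_sqrt (hEG2 l)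
      _ = Real.sqrt (Real.sqrt (3 * N)) * s l := by
          rw [Real.sqrt_mul (Real.sqrt_nonneg _), Real.sqrt_sq (hs l).le]
  -- the product of multipliers
  set Pp : ℕ → Fin d → Ω → ℝ :=
    fun n l ω => ∏ k ∈ Finset.range n, (1 - lam0 * h - sigma * W k ω l) with hPpdef
  have hPpmeasF : ∀ (n : ℕ) (l : Fin d), Measurable[F n] (Pp n l) := by
    intro n l
    apply Finset.measurable_prod
    intro k hk
    exact (measurable_const.sub (((hWF n k l (Finset.mem_range.mp hk))).const_mul sigma))
  have hPpsucc : ∀ (n : ℕ) (l : Fin d) (ω : Ω),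
      Pp (n+1) l ω = Pp n l ω * (1 - lam0 * h - sigma * W n ω l) := by
    intro n l ω
    exact Finset.prod_range_succ _ n
  -- the key algebraic identity
  have hdiff : ∀ (n : ℕ) (i j : Fin N) (ω : Ω) (l : Fin d),
      x n i ω l - x n j ω l = Pp n l ω * (x 0 i ω l - x 0 j ω l) := by
    intro n
    induction n with
    | zero => intro i j ω l; simp [hPpdef]
    | succ n ih =>
      intro i j ω l
      have e : x (n+1) i ω l - x (n+1) j ω l
          = (1 - lam0 * h - sigma * W n ω l) * (x n i ω l - x n j ω l) := by
        rw [hrec n i ω l, hrec n j ω l]; ring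
      rw [e, ih i j ω l, hPpsucc n l ω]; ring
  -- the convex-hull bound
  have hMb : ∀ (n : ℕ) (ω : Ω) (i : Fin N) (l : Fin d),
      |x n i ω l - M n ω l| ≤ 2 * G l ω * |Pp n l ω| := by
    intro n ω i l
    set r : ℝ := 2 * G l ω * |Pp n l ω| with hrdef
    have hr0 : 0 ≤ r := by positivity
    set K : Set (Fin d → ℝ) :=
      {p | x n i ω l - r ≤ p l ∧ p l ≤ x n i ω l + r} with hKdef
    have hKconv : Convex ℝ K := by
      intro p hp q hq a b ha hb hab
      simp only [hKdef, Set.mem_setOf_eq] at hp hq ⊢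
      have : (a • p + b • q) l = a * p l + b * q l := by
        simp [Pi.add_apply, Pi.smul_apply, smul_eq_mul]
      rw [this]
      have e3 : a * (x n i ω l - r) + b * (x n i ω l - r) = x n i ω l - r := by
        rw [← add_mul, hab, one_mul]
      have e4 : a * (x n i ω l + r) + b * (x n i ω l + r) = x n i ω l + r := by
        rw [← add_mul, hab, one_mul]
      constructor
      · linarith [mul_le_mul_of_nonneg_left hp.1 ha, mul_le_mul_of_nonneg_left hq.1 hb, e3]
      · linarith [mul_le_mul_of_nonneg_left hp.2 ha, mul_le_mul_of_nonneg_left hq.2 hb, e4]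
    have hrange : (Set.range fun j : Fin N => x n j ω) ⊆ K := by
      rintro _ ⟨j, rfl⟩
      simp only [hKdef, Set.mem_setOf_eq]
      have hb : |x n i ω l - x n j ω l| ≤ r := by
        rw [hdiff n i j ω l, abs_mul]
        have : |x 0 i ω l - x 0 j ω l| ≤ 2 * G l ω := by
          calc |x 0 i ω l - x 0 j ω l| ≤ |x 0 i ω l| + |x 0 j ω l| := abs_sub _ _
            _ ≤ G l ω + G l ω := add_le_add (hGb l ω i) (hGb l ω j)
            _ = 2 * G l ω := by ring
        calc |Pp n l ω| * |x 0 i ω l - x 0 j ω l| ≤ |Pp n l ω| * (2 * G l ω) :=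
              mul_le_mul_of_nonneg_left this (abs_nonneg _)
          _ = r := by rw [hrdef]; ring
      have := abs_le.mp hb
      constructor <;> [linarith [this.2]; linarith [this.1]]
    have hMK : M n ω ∈ K := convexHull_min hrange hKconv (hMconv n ω)
    simp only [hKdef, Set.mem_setOf_eq] at hMK
    rw [abs_le]
    constructor <;> linarith [hMK.1, hMK.2]
  -- the main peeling induction
  have Key : ∀ (l : Fin d) (n : ℕ),
      (Integrable (fun ω => G l ω * |Pp n l ω|) P) ∧
      (∫ ω, G l ω * |Pp n l ω| ∂P = α ^ n * ∫ ω, G l ω ∂P) ∧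
      (Integrable (fun ω => G l ω ^ 2 * Pp n l ω ^ 2) P) ∧
      (∫ ω, G l ω ^ 2 * Pp n l ω ^ 2 ∂P = β ^ n * ∫ ω, G l ω ^ 2 ∂P) := by
    intro l n
    induction n with
    | zero =>
      have h0 : Pp 0 l = fun _ => (1:ℝ) := by
        funext ω; simp [hPpdef]
      rw [h0]
      simp only [abs_one, mul_one, one_pow, pow_zero, one_mul]
      exact ⟨hIG l, by simp, hIG2 l, by simp⟩
    | succ n ih =>
      obtain ⟨ih1, ih2, ih3, ih4⟩ := ih
      have hφ1 : Measurable fun y : ℝ => |1 - lam0 * h - sigma * y| := by fun_prop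
      have hφ2 : Measurable fun y : ℝ => (1 - lam0 * h - sigma * y) ^ 2 := by fun_prop
      have hInd1 : IndepFun (fun ω => G l ω * |Pp n l ω|)
          (fun ω => |1 - lam0 * h - sigma * W n ω l|) P :=
        hIF n l _ ((hGmeasF n l).mul (measurable_abs.comp (hPpmeasF n l))) _ hφ1
      have hInd2 : IndepFun (fun ω => G l ω ^ 2 * Pp n l ω ^ 2)
          (fun ω => (1 - lam0 * h - sigma * W n ω l) ^ 2) P :=
        hIF n l _ (((measurable_id.pow_const 2).comp (hGmeasF n l)).mul
          ((measurable_id.pow_const 2).comp (hPpmeasF n l))) _ hφ2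
      have hIc : Integrable (fun ω => |1 - lam0 * h - sigma * W n ω l|) P :=
        hTi n l _ hφ1 hIγc
      have hIc2 : Integrable (fun ω => (1 - lam0 * h - sigma * W n ω l) ^ 2) P :=
        hTi n l _ hφ2 hIγc2
      have hEc : ∫ ω, |1 - lam0 * h - sigma * W n ω l| ∂P = α := hT n l _ hφ1
      have hEc2 : ∫ ω, (1 - lam0 * h - sigma * W n ω l) ^ 2 ∂P = β := by
        rw [hT n l _ hφ2]; exact hEγc2
      have e1 : (fun ω => G l ω * |Pp (n+1) l ω|)
          = fun ω => (G l ω * |Pp n l ω|) * |1 - lam0 * h - sigma * W n ω l| := by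
        funext ω; rw [hPpsucc n l ω, abs_mul]; ring
      have e2 : (fun ω => G l ω ^ 2 * Pp (n+1) l ω ^ 2)
          = fun ω => (G l ω ^ 2 * Pp n l ω ^ 2) * (1 - lam0 * h - sigma * W n ω l) ^ 2 := by
        funext ω; rw [hPpsucc n l ω]; ring
      have hComp1 : Integrable
          (fun ω => (G l ω * |Pp n l ω|) * |1 - lam0 * h - sigma * W n ω l|) P :=
        hInd1.integrable_mul ih1 hIc
      have hComp2 : Integrable
          (fun ω => (G l ω ^ 2 * Pp n l ω ^ 2) * (1 - lam0 * h - sigma * W n ω l) ^ 2) P :=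
        hInd2.integrable_mul ih3 hIc2
      have hEComp1 : ∫ ω, (G l ω * |Pp n l ω|) * |1 - lam0 * h - sigma * W n ω l| ∂P
          = (∫ ω, G l ω * |Pp n l ω| ∂P) * ∫ ω, |1 - lam0 * h - sigma * W n ω l| ∂P :=
        hInd1.integral_fun_mul_eq_mul_integral ih1.aestronglyMeasurable hIc.aestronglyMeasurable
      have hEComp2 : ∫ ω, (G l ω ^ 2 * Pp n l ω ^ 2) * (1 - lam0 * h - sigma * W n ω l) ^ 2 ∂P
          = (∫ ω, G l ω ^ 2 * Pp n l ω ^ 2 ∂P)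
            * ∫ ω, (1 - lam0 * h - sigma * W n ω l) ^ 2 ∂P :=
        hInd2.integral_fun_mul_eq_mul_integral ih3.aestronglyMeasurable hIc2.aestronglyMeasurable
      refine ⟨by rw [e1]; exact hComp1, ?_, by rw [e2]; exact hComp2, ?_⟩
      · rw [e1, hEComp1, ih2, hEc, pow_succ]; ring
      · rw [e2, hEComp2, ih4, hEc2, pow_succ]; ring
  -- the mean bound
  have hMbar : ∀ (n : ℕ) (ω : Ω) (l : Fin d),
      |(1/(N:ℝ)) * ∑ j, x n j ω l - M n ω l| ≤ 2 * G l ω * |Pp n l ω| := by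
    intro n ω l
    have hNne : (N:ℝ) ≠ 0 := Nat.cast_ne_zero.mpr hN.ne'
    have e : (1/(N:ℝ)) * ∑ j, x n j ω l - M n ω l
        = (1/(N:ℝ)) * ∑ j, (x n j ω l - M n ω l) := by
      rw [Finset.sum_sub_distrib, Finset.sum_const, Finset.card_univ, Fintype.card_fin]
      field_simp
      rw [nsmul_eq_mul]
    rw [e, abs_mul, abs_of_nonneg (by positivity : (0:ℝ) ≤ 1/(N:ℝ))]
    calc (1/(N:ℝ)) * |∑ j, (x n j ω l - M n ω l)|
        ≤ (1/(N:ℝ)) * ∑ j, |x n j ω l - M n ω l| :=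
          mul_le_mul_of_nonneg_left (Finset.abs_sum_le_sum_abs _ _) (by positivity)
      _ ≤ (1/(N:ℝ)) * ∑ _j : Fin N, (2 * G l ω * |Pp n l ω|) :=
          mul_le_mul_of_nonneg_left
            (Finset.sum_le_sum fun j _ => hMb n ω j l) (by positivity)
      _ = 2 * G l ω * |Pp n l ω| := by
          rw [Finset.sum_const, Finset.card_univ, Fintype.card_fin, nsmul_eq_mul]
          field_simp
  -- now fix n and i
  intro n i
  have hMamb : Measurable (M n) := (hMmeas n).mono (hFle n) le_rfl
  have hAmeas : ∀ l, Measurable (fun ω => x n i ω l - M n ω l) := fun l =>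
    ((measurable_pi_apply l).comp (hxmeas n i)).sub ((measurable_pi_apply l).comp hMamb)
  -- pointwise bound
  have hptw : ∀ ω, Real.sqrt (∑ l, (x (n+1) i ω l - x n i ω l) ^ 2)
      ≤ (∑ l, 2*(lam0+lam1)*h*(G l ω * |Pp n l ω|))
        + Real.sqrt (∑ l, (sigma * (x n i ω l - M n ω l) * W n ω l) ^ 2) := by
    intro ω
    set u : Fin d → ℝ := fun l => -(lam0*h*(x n i ω l - M n ω l))
      - lam1*h*((1/(N:ℝ)) * ∑ j, x n j ω l - M n ω l) with hudef
    set w : Fin d → ℝ := fun l => -(sigma * (x n i ω l - M n ω l) * W n ω l) with hwdef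
    have e0 : ∑ l, (x (n+1) i ω l - x n i ω l) ^ 2 = ∑ l, (u l + w l) ^ 2 :=
      Finset.sum_congr rfl fun l _ => by
        rw [hudef, hwdef]
        have : x (n+1) i ω l - x n i ω l
            = (-(lam0*h*(x n i ω l - M n ω l))
              - lam1*h*((1/(N:ℝ)) * ∑ j, x n j ω l - M n ω l))
              + (-(sigma * (x n i ω l - M n ω l) * W n ω l)) := by
          rw [hrec n i ω l]; ring
        rw [this]
    have e1 : ∑ l, w l ^ 2 = ∑ l, (sigma * (x n i ω l - M n ω l) * W n ω l) ^ 2 :=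
      Finset.sum_congr rfl fun l _ => by rw [hwdef]; ring
    have hul : ∀ l, |u l| ≤ 2*(lam0+lam1)*h*(G l ω * |Pp n l ω|) := by
      intro l
      have h1 : |u l| ≤ |lam0*h*(x n i ω l - M n ω l)|
          + |lam1*h*((1/(N:ℝ)) * ∑ j, x n j ω l - M n ω l)| := by
        rw [hudef]
        calc |(-(lam0*h*(x n i ω l - M n ω l)))
            - lam1*h*((1/(N:ℝ)) * ∑ j, x n j ω l - M n ω l)|
            ≤ |(-(lam0*h*(x n i ω l - M n ω l)))|
              + |lam1*h*((1/(N:ℝ)) * ∑ j, x n j ω l - M n ω l)| := abs_sub _ _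
          _ = _ := by rw [abs_neg]
      have h2 : |lam0*h*(x n i ω l - M n ω l)| ≤ lam0*h*(2*G l ω*|Pp n l ω|) := by
        rw [abs_mul, abs_of_nonneg (by positivity : (0:ℝ) ≤ lam0*h)]
        exact mul_le_mul_of_nonneg_left (hMb n ω i l) (by positivity)
      have h3 : |lam1*h*((1/(N:ℝ)) * ∑ j, x n j ω l - M n ω l)|
          ≤ lam1*h*(2*G l ω*|Pp n l ω|) := by
        rw [abs_mul, abs_of_nonneg (by positivity : (0:ℝ) ≤ lam1*h)]
        exact mul_le_mul_of_nonneg_left (hMbar n ω l) (by positivity)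
      calc |u l| ≤ _ := h1
        _ ≤ lam0*h*(2*G l ω*|Pp n l ω|) + lam1*h*(2*G l ω*|Pp n l ω|) := add_le_add h2 h3
        _ = 2*(lam0+lam1)*h*(G l ω * |Pp n l ω|) := by ring
    calc Real.sqrt (∑ l, (x (n+1) i ω l - x n i ω l) ^ 2)
        = Real.sqrt (∑ l, (u l + w l) ^ 2) := by rw [e0]
      _ ≤ Real.sqrt (∑ l, u l ^ 2) + Real.sqrt (∑ l, w l ^ 2) :=
          AdCBOAux3.sqrt_sum_sq_add_le u w
      _ ≤ (∑ l, |u l|) + Real.sqrt (∑ l, w l ^ 2) :=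
          add_le_add_left (AdCBOAux3.sqrt_sum_sq_le_sum_abs u) _
      _ ≤ (∑ l, 2*(lam0+lam1)*h*(G l ω * |Pp n l ω|)) + Real.sqrt (∑ l, w l ^ 2) :=
          add_le_add_left (Finset.sum_le_sum fun l _ => hul l) _
      _ = _ := by rw [e1]
  -- integrability of the pieces
  have hIGPW : ∀ l, Integrable (fun ω => (G l ω * |Pp n l ω|) * |W n ω l|) P := fun l =>
    (hIF n l _ ((hGmeasF n l).mul (measurable_abs.comp (hPpmeasF n l)))
      (fun y => |y|) measurable_abs).integrable_mul (Key l n).1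
      (hTi n l _ measurable_abs hIγabs)
  have hIGPW2 : ∀ l, Integrable (fun ω => (G l ω ^ 2 * Pp n l ω ^ 2) * (W n ω l) ^ 2) P :=
    fun l =>
    (hIF n l _ (((measurable_id.pow_const 2).comp (hGmeasF n l)).mul
        ((measurable_id.pow_const 2).comp (hPpmeasF n l)))
      (fun y => y ^ 2) (by fun_prop)).integrable_mul (Key l n).2.2.1
      (hTi n l _ (by fun_prop) hIγ2)
  have hEGPW2 : ∀ l, ∫ ω, (G l ω ^ 2 * Pp n l ω ^ 2) * (W n ω l) ^ 2 ∂P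
      = (β ^ n * ∫ ω, G l ω ^ 2 ∂P) * h := by
    intro l
    have hInd : IndepFun (fun ω => G l ω ^ 2 * Pp n l ω ^ 2)
        (fun ω => (W n ω l) ^ 2) P :=
      hIF n l _ (((measurable_id.pow_const 2).comp (hGmeasF n l)).mul
        ((measurable_id.pow_const 2).comp (hPpmeasF n l))) (fun y => y ^ 2) (by fun_prop)
    have hEq : ∫ ω, (G l ω ^ 2 * Pp n l ω ^ 2) * (W n ω l) ^ 2 ∂P
        = (∫ ω, G l ω ^ 2 * Pp n l ω ^ 2 ∂P) * ∫ ω, (W n ω l) ^ 2 ∂P :=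
      hInd.integral_fun_mul_eq_mul_integral (Key l n).2.2.1.aestronglyMeasurable (hTi n l _ (by fun_prop) hIγ2).aestronglyMeasurable
    rw [hEq, (Key l n).2.2.2]
    congr 1
    rw [hT n l (fun y => y ^ 2) (by fun_prop)]
    exact hEγ2
  have hInoise2 : ∀ l, Integrable
      (fun ω => (sigma * (x n i ω l - M n ω l) * W n ω l) ^ 2) P := by
    intro l
    refine Integrable.mono' ((hIGPW2 l).const_mul (4 * sigma ^ 2))
      (((((measurable_const.mul (hAmeas l)).mul (hWml n l))).pow
        measurable_const).aestronglyMeasurable)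
      (Filter.Eventually.of_forall fun ω => ?_)
    rw [Real.norm_eq_abs, abs_of_nonneg (by positivity)]
    have hA2 : (x n i ω l - M n ω l) ^ 2 ≤ (2 * G l ω * |Pp n l ω|) ^ 2 := by
      rw [← sq_abs (x n i ω l - M n ω l)]
      exact pow_le_pow_left₀ (abs_nonneg _) (hMb n ω i l) 2
    calc (sigma * (x n i ω l - M n ω l) * W n ω l) ^ 2
        = sigma ^ 2 * (x n i ω l - M n ω l) ^ 2 * (W n ω l) ^ 2 := by ring
      _ ≤ sigma ^ 2 * (2 * G l ω * |Pp n l ω|) ^ 2 * (W n ω l) ^ 2 := by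
          have := mul_le_mul_of_nonneg_left hA2 (sq_nonneg sigma)
          exact mul_le_mul_of_nonneg_right this (sq_nonneg _)
      _ = 4 * sigma ^ 2 * ((G l ω ^ 2 * Pp n l ω ^ 2) * (W n ω l) ^ 2) := by
          rw [← sq_abs (Pp n l ω)]; ring
  have hEnoise2 : ∀ l, ∫ ω, (sigma * (x n i ω l - M n ω l) * W n ω l) ^ 2 ∂P
      ≤ 4 * sigma ^ 2 * h * β ^ n * (Real.sqrt (3 * N) * (s l) ^ 2) := by
    intro l
    have hstep1 : ∫ ω, (sigma * (x n i ω l - M n ω l) * W n ω l) ^ 2 ∂P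
        ≤ ∫ ω, 4 * sigma ^ 2 * ((G l ω ^ 2 * Pp n l ω ^ 2) * (W n ω l) ^ 2) ∂P := by
      refine integral_mono (hInoise2 l) ((hIGPW2 l).const_mul (4 * sigma ^ 2)) fun ω => ?_
      have hA2 : (x n i ω l - M n ω l) ^ 2 ≤ (2 * G l ω * |Pp n l ω|) ^ 2 := by
        rw [← sq_abs (x n i ω l - M n ω l)]
        exact pow_le_pow_left₀ (abs_nonneg _) (hMb n ω i l) 2
      calc (sigma * (x n i ω l - M n ω l) * W n ω l) ^ 2
          = sigma ^ 2 * (x n i ω l - M n ω l) ^ 2 * (W n ω l) ^ 2 := by ring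
        _ ≤ sigma ^ 2 * (2 * G l ω * |Pp n l ω|) ^ 2 * (W n ω l) ^ 2 := by
            have := mul_le_mul_of_nonneg_left hA2 (sq_nonneg sigma)
            exact mul_le_mul_of_nonneg_right this (sq_nonneg _)
        _ = 4 * sigma ^ 2 * ((G l ω ^ 2 * Pp n l ω ^ 2) * (W n ω l) ^ 2) := by
            rw [← sq_abs (Pp n l ω)]; ring
    rw [integral_const_mul, hEGPW2 l] at hstep1
    calc ∫ ω, (sigma * (x n i ω l - M n ω l) * W n ω l) ^ 2 ∂P
        ≤ 4 * sigma ^ 2 * ((β ^ n * ∫ ω, G l ω ^ 2 ∂P) * h) := hstep1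
      _ ≤ 4 * sigma ^ 2 * ((β ^ n * (Real.sqrt (3 * N) * (s l) ^ 2)) * h) := by
          have := mul_le_mul_of_nonneg_left (hEG2 l) (pow_nonneg hβ0 n)
          have := mul_le_mul_of_nonneg_right this hh.le
          exact mul_le_mul_of_nonneg_left this (by positivity)
      _ = 4 * sigma ^ 2 * h * β ^ n * (Real.sqrt (3 * N) * (s l) ^ 2) := by ring
  -- integrability of the noise norm
  have hSmeas : Measurable (fun ω =>
      Real.sqrt (∑ l, (sigma * (x n i ω l - M n ω l) * W n ω l) ^ 2)) := by
    apply Measurable.sqrt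
    exact Finset.measurable_sum _ fun l _ =>
      ((measurable_const.mul (hAmeas l)).mul (hWml n l)).pow measurable_const
  have hSptw : ∀ ω, Real.sqrt (∑ l, (sigma * (x n i ω l - M n ω l) * W n ω l) ^ 2)
      ≤ ∑ l, 2 * sigma * ((G l ω * |Pp n l ω|) * |W n ω l|) := by
    intro ω
    calc Real.sqrt (∑ l, (sigma * (x n i ω l - M n ω l) * W n ω l) ^ 2)
        ≤ ∑ l, |sigma * (x n i ω l - M n ω l) * W n ω l| :=
          AdCBOAux3.sqrt_sum_sq_le_sum_abs _
      _ ≤ ∑ l, 2 * sigma * ((G l ω * |Pp n l ω|) * |W n ω l|) := by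
          refine Finset.sum_le_sum fun l _ => ?_
          rw [abs_mul, abs_mul, abs_of_nonneg hsigma]
          calc sigma * |x n i ω l - M n ω l| * |W n ω l|
              ≤ sigma * (2 * G l ω * |Pp n l ω|) * |W n ω l| := by
                refine mul_le_mul_of_nonneg_right ?_ (abs_nonneg _)
                exact mul_le_mul_of_nonneg_left (hMb n ω i l) hsigma
            _ = 2 * sigma * ((G l ω * |Pp n l ω|) * |W n ω l|) := by ring
  have hISn : Integrable (fun ω =>
      Real.sqrt (∑ l, (sigma * (x n i ω l - M n ω l) * W n ω l) ^ 2)) P := by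
    refine Integrable.mono'
      (integrable_finset_sum Finset.univ fun l (_ : l ∈ Finset.univ) =>
        (hIGPW l).const_mul (2 * sigma))
      hSmeas.aestronglyMeasurable (Filter.Eventually.of_forall fun ω => ?_)
    rw [Real.norm_eq_abs, abs_of_nonneg (Real.sqrt_nonneg _)]
    exact hSptw ω
  have hISn2 : Integrable (fun ω =>
      (Real.sqrt (∑ l, (sigma * (x n i ω l - M n ω l) * W n ω l) ^ 2)) ^ 2) P := by
    refine (integrable_finset_sum Finset.univ fun l (_ : l ∈ Finset.univ) =>
      hInoise2 l).congr (Filter.Eventually.of_forall fun ω => ?_)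
    exact (Real.sq_sqrt (Finset.sum_nonneg fun l _ => sq_nonneg _)).symm
  -- main integral inequality
  have hmax0 : (0:ℝ) ≤ max (∑ l, s l) (∑ l, (s l) ^ 2) :=
    le_trans (Finset.sum_nonneg fun l _ => (hs l).le) (le_max_left _ _)
  have hCt0 : (0:ℝ) ≤ Ct := by
    rw [hCtdef]; exact mul_nonneg (by positivity) hmax0
  have hIdrift : Integrable (fun ω => ∑ l, 2*(lam0+lam1)*h*(G l ω * |Pp n l ω|)) P :=
    integrable_finset_sum Finset.univ fun l (_ : l ∈ Finset.univ) =>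
      ((Key l n).1.const_mul (2*(lam0+lam1)*h))
  have hmain : ∫ ω, Real.sqrt (∑ l, (x (n + 1) i ω l - x n i ω l) ^ 2) ∂P
      ≤ ∫ ω, ((∑ l, 2*(lam0+lam1)*h*(G l ω * |Pp n l ω|))
          + Real.sqrt (∑ l, (sigma * (x n i ω l - M n ω l) * W n ω l) ^ 2)) ∂P :=
    integral_mono_of_nonneg (Filter.Eventually.of_forall fun ω => Real.sqrt_nonneg _)
      (hIdrift.add hISn) (Filter.Eventually.of_forall hptw)
  rw [integral_add hIdrift hISn, integral_finset_sum Finset.univ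
    (fun l _ => ((Key l n).1.const_mul (2*(lam0+lam1)*h)))] at hmain
  -- term 1 bound
  have hT1 : ∑ l, ∫ ω, 2*(lam0+lam1)*h*(G l ω * |Pp n l ω|) ∂P
      ≤ 2*(lam0+lam1)*h*Ct*α^n := by
    have e1 : ∀ l : Fin d, ∫ ω, 2*(lam0+lam1)*h*(G l ω * |Pp n l ω|) ∂P
        = (2*(lam0+lam1)*h*α^n) * ∫ ω, G l ω ∂P := by
      intro l
      rw [integral_const_mul, (Key l n).2.1]; ring
    rw [Finset.sum_congr rfl fun l _ => e1 l, ← Finset.mul_sum]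
    have hsum : ∑ l, ∫ ω, G l ω ∂P
        ≤ Real.sqrt (Real.sqrt (3*N)) * ∑ l, s l := by
      rw [Finset.mul_sum]; exact Finset.sum_le_sum fun l _ => hEG l
    have h3N1 : (1:ℝ) ≤ 3 * N := by
      have h1 : (1:ℝ) ≤ (N:ℝ) := by exact_mod_cast hN
      linarith
    have hsq1 : (1:ℝ) ≤ Real.sqrt (3*N) := by
      rw [show (1:ℝ) = Real.sqrt 1 by simp]
      exact Real.sqrt_le_sqrt h3N1
    have hQ : Real.sqrt (Real.sqrt (3*N)) ≤ Real.sqrt (3*(N:ℝ)) := by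
      have h2 : Real.sqrt (3*(N:ℝ)) ≤ (Real.sqrt (3*(N:ℝ)))^2 := by nlinarith [hsq1]
      calc Real.sqrt (Real.sqrt (3*(N:ℝ))) ≤ Real.sqrt ((Real.sqrt (3*(N:ℝ)))^2) :=
            Real.sqrt_le_sqrt h2
        _ = Real.sqrt (3*(N:ℝ)) := Real.sqrt_sq (Real.sqrt_nonneg _)
    have hfin : Real.sqrt (Real.sqrt (3*N)) * ∑ l, s l ≤ Ct := by
      rw [hCtdef]
      have hs0 : (0:ℝ) ≤ ∑ l, s l := Finset.sum_nonneg fun l _ => (hs l).le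
      calc Real.sqrt (Real.sqrt (3*N)) * ∑ l, s l
          ≤ Real.sqrt (3*(N:ℝ)) * max (∑ l, s l) (∑ l, (s l) ^ 2) :=
            mul_le_mul hQ (le_max_left _ _) hs0 (Real.sqrt_nonneg _)
        _ ≤ 4 * Real.sqrt (3*(N:ℝ)) * max (∑ l, s l) (∑ l, (s l) ^ 2) := by
            nlinarith [mul_nonneg (Real.sqrt_nonneg (3*(N:ℝ))) hmax0]
    have hEGnn : (0:ℝ) ≤ ∑ l, ∫ ω, G l ω ∂P :=
      Finset.sum_nonneg fun l _ => integral_nonneg (hG0 l)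
    calc (2*(lam0+lam1)*h*α^n) * ∑ l, ∫ ω, G l ω ∂P
        ≤ (2*(lam0+lam1)*h*α^n) * Ct := by
          refine mul_le_mul_of_nonneg_left (le_trans hsum hfin) ?_
          have := pow_nonneg hα0 n
          positivity
      _ = 2*(lam0+lam1)*h*Ct*α^n := by ring
  -- term 2 bound
  have hT2 : ∫ ω, Real.sqrt (∑ l, (sigma*(x n i ω l - M n ω l)*W n ω l)^2) ∂P
      ≤ 2*sigma*Real.sqrt (h*Ct)*β^((n:ℝ)/2) := by
    have hstep1 : ∫ ω, Real.sqrt (∑ l, (sigma*(x n i ω l - M n ω l)*W n ω l)^2) ∂P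
        ≤ Real.sqrt (∫ ω,
            (Real.sqrt (∑ l, (sigma*(x n i ω l - M n ω l)*W n ω l)^2))^2 ∂P) :=
      AdCBOAux3.int_le_sqrt_int_sq P (fun ω => Real.sqrt_nonneg _) hISn hISn2
    have hSn2 : ∫ ω, (Real.sqrt (∑ l, (sigma*(x n i ω l - M n ω l)*W n ω l)^2))^2 ∂P
        = ∑ l, ∫ ω, (sigma*(x n i ω l - M n ω l)*W n ω l)^2 ∂P := by
      rw [integral_congr_ae (Filter.Eventually.of_forall fun ω =>
        Real.sq_sqrt (Finset.sum_nonneg fun l _ => sq_nonneg _))]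
      exact integral_finset_sum Finset.univ fun l _ => hInoise2 l
    have hSn2le : ∫ ω, (Real.sqrt (∑ l, (sigma*(x n i ω l - M n ω l)*W n ω l)^2))^2 ∂P
        ≤ 4*sigma^2*h*β^n*(Real.sqrt (3*N) * ∑ l, (s l)^2) := by
      rw [hSn2]
      calc ∑ l, ∫ ω, (sigma*(x n i ω l - M n ω l)*W n ω l)^2 ∂P
          ≤ ∑ l, 4*sigma^2*h*β^n*(Real.sqrt (3*N) * (s l)^2) :=
            Finset.sum_le_sum fun l _ => hEnoise2 l
        _ = 4*sigma^2*h*β^n*(Real.sqrt (3*N) * ∑ l, (s l)^2) := by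
            rw [← Finset.mul_sum, ← Finset.mul_sum]
    have hc0 : (0:ℝ) ≤ 4*sigma^2*h*β^n :=
      mul_nonneg (by positivity) (pow_nonneg hβ0 n)
    have ebeta : (β ^ ((n:ℝ)/2))^2 = β ^ n := by
      rw [← Real.rpow_natCast (β ^ ((n:ℝ)/2)) 2, ← Real.rpow_mul hβ0,
        show ((n:ℝ)/2 * ((2:ℕ):ℝ)) = (n:ℝ) by push_cast; ring, Real.rpow_natCast]
    have hrhs0 : (0:ℝ) ≤ 2*sigma*Real.sqrt (h*Ct)*β^((n:ℝ)/2) :=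
      mul_nonneg (mul_nonneg (by positivity) (Real.sqrt_nonneg _))
        (Real.rpow_nonneg hβ0 _)
    have hsq : 4*sigma^2*h*β^n*(Real.sqrt (3*N) * ∑ l, (s l)^2)
        ≤ (2*sigma*Real.sqrt (h*Ct)*β^((n:ℝ)/2))^2 := by
      have e1 : (2*sigma*Real.sqrt (h*Ct)*β^((n:ℝ)/2))^2 = 4*sigma^2*(h*Ct)*β^n := by
        rw [mul_pow, mul_pow, ebeta, Real.sq_sqrt (mul_nonneg hh.le hCt0)]
        ring
      rw [e1]
      have hX : Real.sqrt (3*N) * ∑ l, (s l)^2 ≤ Ct := by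
        rw [hCtdef]
        have h1 : (∑ l, (s l)^2) ≤ max (∑ l, s l) (∑ l, (s l) ^ 2) := le_max_right _ _
        nlinarith [Real.sqrt_nonneg (3*(N:ℝ)),
          mul_nonneg (Real.sqrt_nonneg (3*(N:ℝ))) hmax0,
          mul_le_mul_of_nonneg_left h1 (Real.sqrt_nonneg (3*(N:ℝ)))]
      calc 4*sigma^2*h*β^n*(Real.sqrt (3*N) * ∑ l, (s l)^2)
          ≤ 4*sigma^2*h*β^n*Ct := mul_le_mul_of_nonneg_left hX hc0
        _ = 4*sigma^2*(h*Ct)*β^n := by ring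
    calc ∫ ω, Real.sqrt (∑ l, (sigma*(x n i ω l - M n ω l)*W n ω l)^2) ∂P
        ≤ Real.sqrt (∫ ω,
            (Real.sqrt (∑ l, (sigma*(x n i ω l - M n ω l)*W n ω l)^2))^2 ∂P) := hstep1
      _ ≤ Real.sqrt ((2*sigma*Real.sqrt (h*Ct)*β^((n:ℝ)/2))^2) :=
          Real.sqrt_le_sqrt (le_trans hSn2le hsq)
      _ = 2*sigma*Real.sqrt (h*Ct)*β^((n:ℝ)/2) := Real.sqrt_sq hrhs0
  exact le_trans hmain (add_le_add hT1 hT2)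
end

section
/- Assume σ > 0. Then for every pair i ≠ j and every coordinate l ∈ {1,…,d}, almost surely on the event {x_0^{i,l} ≠ x_0^{j,l}} one has lim_{n→∞} (1/n) log |x_n^{i,l} − x_n^{j,l}| = E[ log |1 − hλ₀ − σ√h Z| ], where Z is a standard Gaussian random variable (in particular the right-hand side is a finite real number). -/
open MeasureTheory ProbabilityTheory Filter

section Helpers
open Real NNReal

lemma log_abs_le_of_le_one {t : ℝ} (ht0 : 0 ≤ t) (ht1 : t ≤ 1) :
    |Real.log t| ≤ 2 * t ^ (-(1/2) : ℝ) := by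
  rcases eq_or_lt_of_le ht0 with h0 | h0
  · simp [← h0, Real.zero_rpow (by norm_num : (-(1/2) : ℝ) ≠ 0)]
  · have hlogle : Real.log t ≤ 0 := Real.log_nonpos ht0 ht1
    have hpos := Real.rpow_pos_of_pos h0 (-(1/2) : ℝ)
    have hle : Real.log (t ^ (-(1/2):ℝ)) ≤ t ^ (-(1/2):ℝ) :=
      (Real.log_le_sub_one_of_pos hpos).trans (by linarith)
    rw [Real.log_rpow h0] at hle
    rw [abs_of_nonpos hlogle]
    linarith

lemma abs_rpow_eq_add (x : ℝ) :
    |x| ^ (-(1/2) : ℝ) = x ^ (-(1/2) : ℝ) + (-x) ^ (-(1/2) : ℝ) := by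
  have hneg : ∀ y : ℝ, y < 0 → y ^ (-(1/2) : ℝ) = 0 := by
    intro y hy
    rw [Real.rpow_def_of_neg hy]
    have : Real.cos (-(1/2) * π) = 0 := by
      rw [show (-(1/2) * π : ℝ) = -(π/2) by ring, Real.cos_neg, Real.cos_pi_div_two]
    rw [this, mul_zero]
  rcases lt_trichotomy x 0 with hx | hx | hx
  · rw [abs_of_neg hx, hneg x hx, zero_add]
  · simp [hx, Real.zero_rpow (by norm_num : (-(1/2) : ℝ) ≠ 0)]
  · rw [abs_of_pos hx, hneg (-x) (by linarith), add_zero]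

lemma integrableOn_abs_sub_rpow (z0 b : ℝ) :
    IntegrableOn (fun z : ℝ => |z - z0| ^ (-(1/2) : ℝ)) (Set.Icc (z0 - b) (z0 + b)) volume := by
  have h1 : IntervalIntegrable (fun z : ℝ => |z| ^ (-(1/2) : ℝ)) volume (-b) b := by
    have ha : IntervalIntegrable (fun z : ℝ => z ^ (-(1/2) : ℝ)) volume (-b) b :=
      intervalIntegral.intervalIntegrable_rpow' (by norm_num)
    have hb : IntervalIntegrable (fun z : ℝ => (-z) ^ (-(1/2) : ℝ)) volume (-b) b := by
      have := intervalIntegral.intervalIntegrable_rpow'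
        (a := -b) (b := b) (r := (-(1/2) : ℝ)) (by norm_num)
      have h2 := (IntervalIntegrable.iff_comp_neg (f := fun z : ℝ => z ^ (-(1/2) : ℝ)) (by simp)).mp this
      simpa using h2.symm
    simpa only [abs_rpow_eq_add] using ha.add hb
  have h2 : IntervalIntegrable (fun z : ℝ => |z - z0| ^ (-(1/2) : ℝ)) volume
      (-b + z0) (b + z0) := h1.comp_sub_right z0
  have h3 := (intervalIntegrable_iff' (μ := volume)).mp h2
  rcases le_or_gt 0 b with hb0 | hb0
  · have : Set.Icc (z0 - b) (z0 + b) = Set.uIcc (-b + z0) (b + z0) := by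
      rw [Set.uIcc_of_le (by linarith)]
      congr 1 <;> ring
    rwa [this]
  · have : Set.Icc (z0 - b) (z0 + b) = ∅ := Set.Icc_eq_empty (by intro hcon; linarith)
    rw [this]
    exact integrableOn_empty


lemma gaussianPDFReal_le_one (x : ℝ) : gaussianPDFReal 0 1 x ≤ 1 := by
  rw [gaussianPDFReal]
  have hexp : rexp (-(x - 0) ^ 2 / (2 * ((1 : ℝ≥0) : ℝ))) ≤ 1 := by
    rw [Real.exp_le_one_iff]
    apply div_nonpos_of_nonpos_of_nonneg (neg_nonpos_of_nonneg (sq_nonneg _))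
    norm_num
  have hsq : (1 : ℝ) ≤ √(2 * π * ((1 : ℝ≥0) : ℝ)) := by
    rw [show (1 : ℝ) = √1 by simp]
    apply Real.sqrt_le_sqrt
    push_cast
    nlinarith [Real.pi_gt_three]
  calc (√(2 * π * ((1 : ℝ≥0) : ℝ)))⁻¹ * rexp (-(x - 0) ^ 2 / (2 * ((1 : ℝ≥0) : ℝ)))
      ≤ 1 * 1 := by
        apply mul_le_mul _ hexp (Real.exp_nonneg _) zero_le_one
        exact inv_le_one_of_one_le₀ hsq
    _ = 1 := by norm_num

lemma integrable_log_abs_gaussian (a c : ℝ) (hc : c ≠ 0) :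
    Integrable (fun z => Real.log |a - c * z|) (gaussianReal 0 1) := by
  rw [gaussianReal_of_var_ne_zero 0 one_ne_zero,
    integrable_withDensity_iff (measurable_gaussianPDF 0 1)
      (ae_of_all _ fun x => ENNReal.ofReal_lt_top)]
  have hpdf_eq : ∀ x, (gaussianPDF 0 1 x).toReal = gaussianPDFReal 0 1 x := fun x =>
    ENNReal.toReal_ofReal (gaussianPDFReal_nonneg 0 1 x)
  have hcpos : 0 < |c| := abs_pos.mpr hc
  set z0 : ℝ := a / c with hz0
  set I : Set ℝ := Set.Icc (z0 - 1 / |c|) (z0 + 1 / |c|) with hI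
  have habs : ∀ z : ℝ, |a - c * z| = |c| * |z - z0| := by
    intro z
    rw [hz0, show a - c * z = c * (a / c - z) by rw [mul_sub, mul_div_cancel₀ a hc],
      abs_mul, abs_sub_comm]
  set g : ℝ → ℝ := fun z => I.indicator (fun z => 2 * |a - c * z| ^ (-(1/2) : ℝ)) z
    + (|a| + |c| * |z|) * gaussianPDFReal 0 1 z with hg
  have hgint : Integrable g volume := by
    apply Integrable.add
    · apply (IntegrableOn.integrable_indicator _ measurableSet_Icc)
      have heq : ∀ z : ℝ, 2 * |a - c * z| ^ (-(1/2) : ℝ)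
          = (2 * |c| ^ (-(1/2) : ℝ)) * |z - z0| ^ (-(1/2) : ℝ) := by
        intro z
        rw [habs z, Real.mul_rpow (abs_nonneg _) (abs_nonneg _)]
        ring
      simp only [heq]
      exact (integrableOn_abs_sub_rpow z0 (1 / |c|)).const_mul _
    · have hzexp : Integrable (fun z : ℝ => z * rexp (-(1/2) * z ^ 2)) volume := by
        have := integrable_rpow_mul_exp_neg_mul_sq (by norm_num : (0:ℝ) < 1/2)
          (by norm_num : (-1:ℝ) < 1)
        simpa [Real.rpow_one] using this
      have habsz : Integrable (fun z : ℝ => |z| * rexp (-(1/2) * z ^ 2)) volume := by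
        have := hzexp.abs
        simpa [abs_mul, abs_of_pos (Real.exp_pos _)] using this
      have hzpdf : Integrable (fun z : ℝ => |z| * gaussianPDFReal 0 1 z) volume := by
        apply Integrable.mono' habsz
        · exact (measurable_abs.mul (measurable_gaussianPDFReal 0 1)).aestronglyMeasurable
        · refine ae_of_all _ fun z => ?_
          rw [Real.norm_eq_abs, abs_mul, abs_abs,
            abs_of_nonneg (gaussianPDFReal_nonneg 0 1 z)]
          apply mul_le_mul_of_nonneg_left _ (abs_nonneg z)
          rw [gaussianPDFReal]
          calc (√(2 * π * ((1:ℝ≥0):ℝ)))⁻¹ * rexp (-(z - 0) ^ 2 / (2 * ((1:ℝ≥0):ℝ)))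
              ≤ 1 * rexp (-(z - 0) ^ 2 / (2 * ((1:ℝ≥0):ℝ))) := by
                apply mul_le_mul_of_nonneg_right _ (Real.exp_nonneg _)
                apply inv_le_one_of_one_le₀
                rw [show (1 : ℝ) = √1 by simp]
                apply Real.sqrt_le_sqrt
                push_cast
                nlinarith [Real.pi_gt_three]
            _ = rexp (-(1/2) * z ^ 2) := by
                rw [one_mul]
                congr 1
                push_cast
                ring
      have h1 : Integrable (fun z : ℝ => |a| * gaussianPDFReal 0 1 z) volume :=
        (integrable_gaussianPDFReal 0 1).const_mul _
      have h2 := hzpdf.const_mul |c|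
      apply (h1.add h2).congr
      refine ae_of_all _ fun z => ?_
      simp only [Pi.add_apply]
      ring
  apply Integrable.mono' hgint
  · apply Measurable.aestronglyMeasurable
    exact ((measurable_const.sub (measurable_id.const_mul c)).abs.log).mul
      ((measurable_gaussianPDF 0 1).ennreal_toReal)
  · refine ae_of_all _ fun z => ?_
    rw [Real.norm_eq_abs, hpdf_eq, abs_mul,
      abs_of_nonneg (gaussianPDFReal_nonneg 0 1 z)]
    show _ ≤ I.indicator (fun z => 2 * |a - c * z| ^ (-(1/2) : ℝ)) z
      + (|a| + |c| * |z|) * gaussianPDFReal 0 1 z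
    have hb2 : (0:ℝ) ≤ (|a| + |c| * |z|) * gaussianPDFReal 0 1 z :=
      mul_nonneg (by positivity) (gaussianPDFReal_nonneg 0 1 z)
    rcases le_or_gt |a - c * z| 1 with ht1 | ht1
    · have hzI : z ∈ I := by
        rw [hI, Set.mem_Icc]
        have h' : |z - z0| ≤ 1 / |c| := by
          rw [le_div_iff₀ hcpos]
          calc |z - z0| * |c| = |a - c * z| := by rw [habs z]; ring
            _ ≤ 1 := ht1
        have h := abs_le.mp h'
        constructor <;> linarith [h.1, h.2]
      rw [Set.indicator_of_mem hzI]
      have hb1 : |Real.log (|a - c * z|)| * gaussianPDFReal 0 1 z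
          ≤ 2 * |a - c * z| ^ (-(1/2) : ℝ) :=
        calc |Real.log (|a - c * z|)| * gaussianPDFReal 0 1 z
            ≤ (2 * |a - c * z| ^ (-(1/2):ℝ)) * 1 :=
              mul_le_mul (log_abs_le_of_le_one (abs_nonneg _) ht1) (gaussianPDFReal_le_one z)
                (gaussianPDFReal_nonneg 0 1 z) (by positivity)
          _ = _ := mul_one _
      exact hb1.trans (le_add_of_nonneg_right hb2)
    · have hlog : |Real.log (|a - c * z|)| ≤ |a| + |c| * |z| := by
        rw [abs_of_nonneg (Real.log_nonneg ht1.le)]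
        calc Real.log |a - c * z| ≤ |a - c * z| - 1 :=
              Real.log_le_sub_one_of_pos (by linarith)
          _ ≤ |a - c * z| := by linarith
          _ ≤ |a| + |c * z| := by
              rw [show a - c * z = a + -(c * z) by ring]
              exact (abs_add_le _ _).trans_eq (by rw [abs_neg])
          _ = |a| + |c| * |z| := by rw [abs_mul]
      have hind : (0:ℝ) ≤ I.indicator (fun z => 2 * |a - c * z| ^ (-(1/2) : ℝ)) z :=
        Set.indicator_nonneg (fun y _ => by positivity) z
      calc |Real.log (|a - c * z|)| * gaussianPDFReal 0 1 z
          ≤ (|a| + |c| * |z|) * gaussianPDFReal 0 1 z :=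
            mul_le_mul_of_nonneg_right hlog (gaussianPDFReal_nonneg 0 1 z)
        _ ≤ _ := le_add_of_nonneg_left hind

end Helpers

/-- Lyapunov exponent of pairwise differences: for `σ > 0`,
almost surely on `{x_0^{i,l} ≠ x_0^{j,l}}`,
`(1/n) log|x_n^{i,l} − x_n^{j,l}| → E[log|1 − hλ₀ − σ√h·Z|]`, `Z ~ N(0,1)`,
and this expectation is a (finite) real number. -/
theorem adCBO_lyapunov_exponent
    {Ω : Type*} [MeasurableSpace Ω] (P : Measure Ω) [IsProbabilityMeasure P]
    (d N : ℕ) (h lam0 lam1 sigma : ℝ)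
    (hh : 0 < h) (hlam0 : 0 < lam0) (hlam1 : 0 ≤ lam1) (hsigma : 0 < sigma)
    (W : ℕ → Ω → Fin d → ℝ) (x : ℕ → Fin N → Ω → Fin d → ℝ)
    (M : ℕ → Ω → Fin d → ℝ)
    (hWmeas : ∀ n, Measurable (W n))
    (hxmeas : ∀ n i, Measurable (x n i))
    -- all scalar noise components (over time and coordinate) are independent,
    -- each distributed as `N(0, h)`
    (hWindep : iIndepFun
      (fun (p : ℕ × Fin d) ω => W p.1 ω p.2) P)
    (hWlaw : ∀ n l, Measure.map (fun ω => W n ω l) P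
      = gaussianReal 0 (Real.toNNReal h))
    -- `W_{h,n}` is independent of `σ(x_0^1, …, x_0^N, W_{h,0}, …, W_{h,n−1})`
    (hWpast : ∀ n, Indep (MeasurableSpace.comap (W n) inferInstance)
      ((⨆ i : Fin N, MeasurableSpace.comap (x 0 i) inferInstance) ⊔
        (⨆ k : Fin n, MeasurableSpace.comap (W k) inferInstance)) P)
    -- `M_n` is measurable w.r.t. `σ(x_0^1, …, x_0^N, W_{h,0}, …, W_{h,n−1})`
    (hMmeas : ∀ n, @Measurable Ω (Fin d → ℝ)
      ((⨆ i : Fin N, MeasurableSpace.comap (x 0 i) inferInstance) ⊔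
        (⨆ k : Fin n, MeasurableSpace.comap (W k) inferInstance)) _ (M n))
    -- the Ad-CBO recursion
    (hrec : ∀ n i ω l,
      x (n+1) i ω l = x n i ω l - lam0 * h * (x n i ω l - M n ω l)
        - lam1 * h * ((1 / (N : ℝ)) * ∑ j, x n j ω l - M n ω l)
        - sigma * (x n i ω l - M n ω l) * W n ω l)
    -- the initial data are independent of all the noises
    (hx0W : Indep (⨆ i : Fin N, MeasurableSpace.comap (x 0 i) inferInstance)
      (⨆ n : ℕ, MeasurableSpace.comap (W n) inferInstance) P) :
    ∀ i j : Fin N, i ≠ j → ∀ l : Fin d,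
      (∀ᵐ ω ∂P, x 0 i ω l ≠ x 0 j ω l →
        Tendsto (fun n : ℕ => (1 / (n : ℝ)) * Real.log |x n i ω l - x n j ω l|)
          atTop (nhds (∫ z, Real.log |1 - h * lam0 - sigma * Real.sqrt h * z|
            ∂(gaussianReal 0 1))))
      ∧ Integrable
          (fun z => Real.log |1 - h * lam0 - sigma * Real.sqrt h * z|)
          (gaussianReal 0 1) := by
  intro i j hij l
  have hsq : 0 < Real.sqrt h := Real.sqrt_pos.mpr hh
  have hcne : sigma * Real.sqrt h ≠ 0 := (mul_pos hsigma hsq).ne'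
  have hintG : Integrable
      (fun z => Real.log |1 - h * lam0 - sigma * Real.sqrt h * z|)
      (gaussianReal 0 1) := integrable_log_abs_gaussian (1 - h * lam0) (sigma * Real.sqrt h) hcne
  refine ⟨?_, hintG⟩
  -- notation
  set φ : ℝ → ℝ := fun t => Real.log |1 - lam0 * h - sigma * t| with hφ
  have hφmeas : Measurable φ :=
    ((measurable_const.sub (measurable_id.const_mul sigma)).abs).log
  have hWnl : ∀ n, Measurable (fun ω => W n ω l) := fun n =>
    (measurable_pi_apply l).comp (hWmeas n)
  set Y : ℕ → Ω → ℝ := fun n ω => Real.log |1 - lam0 * h - sigma * W n ω l| with hY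
  -- the gaussian map identity
  have hmap : Measure.map (fun z => Real.sqrt h * z) (gaussianReal 0 1)
      = gaussianReal 0 (Real.toNNReal h) := by
    have h1 := gaussianReal_map_const_mul (μ := 0) (v := 1) (Real.sqrt h)
    have h2 : NNReal.mk ((Real.sqrt h)^2) (sq_nonneg _) * 1 = Real.toNNReal h := by
      apply NNReal.coe_injective
      simp only [NNReal.coe_mul, NNReal.coe_one, mul_one, Real.coe_toNNReal _ hh.le]
      exact Real.sq_sqrt hh.le
    rw [h1, h2, mul_zero]
  -- integrability of φ under gaussian 0 h, hence Y 0 integrable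
  have hφint : Integrable φ (gaussianReal 0 (Real.toNNReal h)) := by
    rw [← hmap,
      integrable_map_measure (hφmeas.aestronglyMeasurable) (measurable_const_mul _).aemeasurable]
    have := integrable_log_abs_gaussian (1 - lam0 * h) (sigma * Real.sqrt h) hcne
    apply this.congr
    refine Filter.Eventually.of_forall fun z => ?_
    show Real.log |1 - lam0 * h - sigma * Real.sqrt h * z|
      = Real.log |1 - lam0 * h - sigma * (Real.sqrt h * z)|
    ring_nf
  have hYint : Integrable (Y 0) P := by
    have := (integrable_map_measure hφmeas.aestronglyMeasurable
      (hWnl 0).aemeasurable).mp (by rw [hWlaw 0 l]; exact hφint)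
    exact this
  -- identically distributed
  have hident : ∀ n, IdentDistrib (Y n) (Y 0) P P := by
    intro n
    have hW : IdentDistrib (fun ω => W n ω l) (fun ω => W 0 ω l) P P :=
      ⟨(hWnl n).aemeasurable, (hWnl 0).aemeasurable, by rw [hWlaw n l, hWlaw 0 l]⟩
    exact hW.comp hφmeas
  -- pairwise independence
  have hindep : Pairwise (Function.onFun (IndepFun · · P) Y) := by
    intro m n hmn
    have hmn' : (m, l) ≠ (n, l) := by simp [hmn]
    have := hWindep.indepFun hmn'
    exact this.comp hφmeas hφmeas
  -- strong law
  have hSLLN := strong_law_ae_real Y hYint hindep hident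
  -- the limit value
  have hval : (∫ ω, Y 0 ω ∂P)
      = ∫ z, Real.log |1 - h * lam0 - sigma * Real.sqrt h * z| ∂(gaussianReal 0 1) := by
    have e1 : (∫ ω, Y 0 ω ∂P) = ∫ t, φ t ∂(Measure.map (fun ω => W 0 ω l) P) := by
      rw [integral_map (hWnl 0).aemeasurable hφmeas.aestronglyMeasurable]
    rw [e1, hWlaw 0 l, ← hmap,
      integral_map (measurable_const_mul _).aemeasurable hφmeas.aestronglyMeasurable]
    apply integral_congr_ae
    refine Filter.Eventually.of_forall fun z => ?_
    show Real.log |1 - lam0 * h - sigma * (Real.sqrt h * z)|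
      = Real.log |1 - h * lam0 - sigma * Real.sqrt h * z|
    ring_nf
  -- the factors are a.s. nonzero
  have hA0 : ∀ n : ℕ, ∀ᵐ ω ∂P, 1 - lam0 * h - sigma * W n ω l ≠ 0 := by
    intro n
    have hnull : P ((fun ω => W n ω l) ⁻¹' {(1 - lam0 * h) / sigma}) = 0 := by
      rw [← Measure.map_apply (hWnl n) (measurableSet_singleton _), hWlaw n l]
      exact gaussianReal_absolutelyContinuous 0
        (Real.toNNReal_pos.mpr hh).ne' (measure_singleton _)
    have : ∀ᵐ ω ∂P, W n ω l ≠ (1 - lam0 * h) / sigma := by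
      rw [ae_iff]
      convert hnull using 2
      ext ω
      simp [Set.mem_preimage]
    filter_upwards [this] with ω hω hcon
    apply hω
    field_simp
    linarith
  have hAll : ∀ᵐ ω ∂P, ∀ n, 1 - lam0 * h - sigma * W n ω l ≠ 0 := ae_all_iff.mpr hA0
  filter_upwards [hSLLN, hAll] with ω hSL hA hne
  -- product formula
  have key : ∀ n : ℕ, x n i ω l - x n j ω l
      = (x 0 i ω l - x 0 j ω l) * ∏ k ∈ Finset.range n, (1 - lam0 * h - sigma * W k ω l) := by
    intro n
    induction n with
    | zero => simp
    | succ n ih =>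
      have step : x (n+1) i ω l - x (n+1) j ω l
          = (1 - lam0 * h - sigma * W n ω l) * (x n i ω l - x n j ω l) := by
        rw [hrec n i ω l, hrec n j ω l]
        ring
      rw [step, ih, Finset.prod_range_succ]
      ring
  have hDne : (|x 0 i ω l - x 0 j ω l| : ℝ) ≠ 0 := abs_ne_zero.mpr (sub_ne_zero.mpr hne)
  have hlogsum : ∀ n : ℕ, Real.log |x n i ω l - x n j ω l|
      = Real.log |x 0 i ω l - x 0 j ω l| + ∑ k ∈ Finset.range n, Y k ω := by
    intro n
    have hprodne : (∏ k ∈ Finset.range n, (1 - lam0 * h - sigma * W k ω l)) ≠ 0 :=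
      Finset.prod_ne_zero_iff.mpr fun k _ => hA k
    rw [key n, abs_mul, Real.log_mul hDne (abs_ne_zero.mpr hprodne), Finset.abs_prod,
      Real.log_prod (fun k _ => abs_ne_zero.mpr (hA k))]
  -- conclude
  have heq : (fun n : ℕ => (1 / (n : ℝ)) * Real.log |x n i ω l - x n j ω l|)
      = fun n : ℕ => Real.log |x 0 i ω l - x 0 j ω l| * (1 / (n : ℝ))
        + (∑ k ∈ Finset.range n, Y k ω) / (n : ℝ) := by
    funext n
    rw [hlogsum n]
    ring
  rw [heq, ← hval]
  have h0 : Tendsto (fun n : ℕ => Real.log |x 0 i ω l - x 0 j ω l| * (1 / (n : ℝ)))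
      atTop (nhds 0) := by
    simpa using (tendsto_const_nhds (x := Real.log |x 0 i ω l - x 0 j ω l|)).mul tendsto_one_div_atTop_nhds_zero_nat
  simpa using h0.add hSL
end
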